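/- arXiv:1003.1295 — 7 statements merged into one kernel-verified Lean document; each statement's English description precedes it below -/
import Mathlib

section
/- For any y ∈ [0,1]^N, any subset S ⊆ [N], and any positive integer k, if R(y) denotes the random vector obtained by independently rounding each coordinate y_i to 1 with probability y_i and to 0 otherwise, then E[min{k, Σ_{i∈S} R(y)_i}] ≥ k·(1 − exp(−(Σ_{i∈S} y_i)/k)). -/
open MeasureTheory ProbabilityTheory

/-- Pointwise inequality: for 0/1-valued `x`,
`K (1 - ∏ (1 - x i / K)) ≤ min K (∑ x i)`. -/
lemma aux_pointwise {ι : Type*} (K : ℝ) (hK : 1 ≤ K) (s : Finset ι) (x : ι → ℝ)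
    (hx : ∀ i ∈ s, x i = 0 ∨ x i = 1) :
    K * (1 - ∏ i ∈ s, (1 - x i / K)) ≤ min K (∑ i ∈ s, x i) := by
  classical
  have hK0 : (0:ℝ) < K := lt_of_lt_of_le one_pos hK
  set m : ℕ := (s.filter fun i => x i = 1).card with hm
  have hsum : ∑ i ∈ s, x i = (m : ℝ) := by
    rw [hm, Finset.card_filter, Nat.cast_sum]
    refine Finset.sum_congr rfl fun i hi => ?_
    rcases hx i hi with h | h <;> simp [h]
  have hprod : ∏ i ∈ s, (1 - x i / K) = (1 - 1/K) ^ m := by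
    rw [← Finset.prod_filter_mul_prod_filter_not s (fun i => x i = 1)]
    have h1 : ∏ i ∈ s.filter (fun i => x i = 1), (1 - x i / K) = (1 - 1/K) ^ m := by
      rw [hm, ← Finset.prod_const]
      refine Finset.prod_congr rfl fun i hi => ?_
      rw [(Finset.mem_filter.mp hi).2]
    have h2 : ∏ i ∈ s.filter (fun i => ¬ x i = 1), (1 - x i / K) = 1 := by
      refine Finset.prod_eq_one fun i hi => ?_
      obtain ⟨his, hne⟩ := Finset.mem_filter.mp hi
      rcases hx i his with h | h
      · simp [h]
      · exact absurd h hne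
    rw [h1, h2, mul_one]
  rw [hsum, hprod]
  have hbase0 : (0:ℝ) ≤ 1 - 1/K := by
    have : 1/K ≤ 1 := by
      rw [div_le_one hK0]; exact hK
    linarith
  refine le_min ?_ ?_
  · have : (0:ℝ) ≤ (1 - 1/K) ^ m := pow_nonneg hbase0 m
    nlinarith
  · have hbern : 1 + (m:ℝ) * (-(1/K)) ≤ (1 + (-(1/K))) ^ m := by
      refine one_add_mul_le_pow ?_ m
      have : (0:ℝ) < 1/K := by positivity
      linarith
    have : 1 - (m:ℝ)/K ≤ (1 - 1/K) ^ m := by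
      have h1 : 1 + (m:ℝ) * (-(1/K)) = 1 - (m:ℝ)/K := by ring
      have h2 : (1 + (-(1/K)) : ℝ) = 1 - 1/K := by ring
      rw [h1, h2] at hbern; exact hbern
    have hKm : K * (1 - (1 - 1/K)^m) ≤ K * ((m:ℝ)/K) := by
      apply mul_le_mul_of_nonneg_left _ (le_of_lt hK0)
      linarith
    calc K * (1 - (1 - 1/K)^m) ≤ K * ((m:ℝ)/K) := hKm
      _ = (m:ℝ) := by field_simp

/-- For independent randomized rounding `R(y)` of `y ∈ [0,1]^N`, and any `S ⊆ [N]` and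
positive integer `k`, `E[min{k, Sum_S(R(y))}] ≥ k (1 − exp(−Sum_S(y)/k))`. -/
theorem stmt_0 {Ω : Type*} [MeasurableSpace Ω] (μ : Measure Ω) [IsProbabilityMeasure μ]
    (N : ℕ) (y : Fin N → ℝ) (hy : ∀ i, y i ∈ Set.Icc (0 : ℝ) 1)
    (X : Fin N → Ω → ℝ) (hXmeas : ∀ i, Measurable (X i))
    (hX01 : ∀ i ω, X i ω = 0 ∨ X i ω = 1)
    (hXmarg : ∀ i, μ {ω | X i ω = 1} = ENNReal.ofReal (y i))
    (hXindep : iIndepFun X μ)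
    (S : Finset (Fin N)) (k : ℕ) (hk : 0 < k) :
    ∫ ω, min (k : ℝ) (∑ i ∈ S, X i ω) ∂μ
      ≥ (k : ℝ) * (1 - Real.exp (-(∑ i ∈ S, y i) / k)) := by
  classical
  set K : ℝ := (k : ℝ) with hKdef
  have hK1 : (1:ℝ) ≤ K := by rw [hKdef]; exact_mod_cast Nat.one_le_iff_ne_zero.mpr hk.ne'
  have hK0 : (0:ℝ) < K := lt_of_lt_of_le one_pos hK1
  -- the transformed variables Z i = 1 - X i / K
  set Z : Fin N → Ω → ℝ := fun i ω => 1 - X i ω / K with hZdef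
  have hZmeas : ∀ i, Measurable (Z i) := fun i =>
    measurable_const.sub ((hXmeas i).div_const K)
  have hZindep : iIndepFun Z μ := by
    have := hXindep.comp (fun _ (x : ℝ) => 1 - x / K)
      (fun _ => measurable_const.sub (measurable_id.div_const K))
    exact this
  have hZbound : ∀ i ω, ‖Z i ω‖ ≤ 1 := by
    intro i ω
    rcases hX01 i ω with h | h
    · simp [hZdef, h]
    · have h1 : 1/K ≤ 1 := by rw [div_le_one hK0]; exact hK1
      have h2 : 0 < 1/K := by positivity
      simp only [hZdef, h]
      rw [Real.norm_eq_abs, abs_le]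
      constructor <;> [linarith; linarith]
  have hZint : ∀ i, Integrable (Z i) μ := fun i =>
    (integrable_const (1:ℝ)).mono' (hZmeas i).aestronglyMeasurable
      (Filter.Eventually.of_forall (hZbound i))
  -- E[X i] = y i
  have hXint : ∀ i, Integrable (X i) μ := by
    intro i
    refine (integrable_const (1:ℝ)).mono' (hXmeas i).aestronglyMeasurable
      (Filter.Eventually.of_forall fun ω => ?_)
    rcases hX01 i ω with h | h <;> simp [h]
  have hEX : ∀ i, ∫ ω, X i ω ∂μ = y i := by
    intro i
    have hset : MeasurableSet {ω | X i ω = 1} := by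
      have : {ω | X i ω = 1} = (X i) ⁻¹' {1} := rfl
      rw [this]; exact (hXmeas i) (measurableSet_singleton 1)
    have hXind : (X i) = Set.indicator {ω | X i ω = 1} (fun _ => (1:ℝ)) := by
      funext ω
      rcases hX01 i ω with h | h
      · rw [Set.indicator_apply]
        have : ω ∉ {ω | X i ω = 1} := by simp [Set.mem_setOf_eq, h]
        rw [if_neg this, h]
      · rw [Set.indicator_apply]
        have : ω ∈ {ω | X i ω = 1} := h
        rw [if_pos this, h]
    calc ∫ ω, X i ω ∂μ = ∫ ω, Set.indicator {ω | X i ω = 1} (fun _ => (1:ℝ)) ω ∂μ := by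
          rw [← hXind]
      _ = (μ {ω | X i ω = 1}).toReal • (1:ℝ) := integral_indicator_const (1:ℝ) hset
      _ = y i := by
          rw [hXmarg i, smul_eq_mul, mul_one, ENNReal.toReal_ofReal (hy i).1]
  have hEZ : ∀ i, ∫ ω, Z i ω ∂μ = 1 - y i / K := by
    intro i
    simp only [hZdef]
    rw [integral_sub (integrable_const 1) ((hXint i).div_const K), integral_const,
      probReal_univ, one_smul, integral_div, hEX]
  -- product formula by induction
  have hprod : ∀ s : Finset (Fin N), Integrable (fun ω => ∏ i ∈ s, Z i ω) μ ∧
      ∫ ω, ∏ i ∈ s, Z i ω ∂μ = ∏ i ∈ s, (1 - y i / K) := by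
    intro s
    induction s using Finset.induction_on with
    | empty => simp
    | insert _ _ hi =>
      rename_i a s ih
      have hindep : IndepFun (fun ω => ∏ j ∈ s, Z j ω) (Z a) μ := by
        have := hZindep.indepFun_finset_prod_of_notMem hZmeas hi
        have heq : (∏ j ∈ s, Z j) = fun ω => ∏ j ∈ s, Z j ω := by
          funext ω; exact Finset.prod_apply ω s Z
        rwa [heq] at this
      have hmul : (fun ω => ∏ i ∈ insert a s, Z i ω)
          = (fun ω => ∏ j ∈ s, Z j ω) * (Z a) := by
        funext ω
        simp [Finset.prod_insert hi, mul_comm]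
      constructor
      · rw [hmul]
        exact hindep.integrable_mul ih.1 (hZint a)
      · rw [hmul, hindep.integral_mul_eq_mul_integral ih.1.aestronglyMeasurable (hZint a).aestronglyMeasurable,
          ih.2, hEZ, Finset.prod_insert hi]
        ring
  -- integrability of the min
  have hintmin : Integrable (fun ω => min K (∑ i ∈ S, X i ω)) μ := by
    refine (integrable_const K).mono'
      ((measurable_const.min (Finset.measurable_sum S fun i _ => hXmeas i)).aestronglyMeasurable)
      (Filter.Eventually.of_forall fun ω => ?_)
    have hsnn : (0:ℝ) ≤ ∑ i ∈ S, X i ω := by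
      refine Finset.sum_nonneg fun i _ => ?_
      rcases hX01 i ω with h | h <;> simp [h]
    rw [Real.norm_eq_abs, abs_le]
    constructor
    · have := le_min (le_of_lt hK0) hsnn
      linarith [this]
    · exact min_le_left _ _
  -- integrable RHS
  have hintr : Integrable (fun ω => K * (1 - ∏ i ∈ S, Z i ω)) μ :=
    (((integrable_const (1:ℝ)).sub (hprod S).1).const_mul K)
  -- pointwise comparison, integrate
  have hmono : ∫ ω, K * (1 - ∏ i ∈ S, Z i ω) ∂μ ≤ ∫ ω, min K (∑ i ∈ S, X i ω) ∂μ := by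
    refine integral_mono hintr hintmin fun ω => ?_
    exact aux_pointwise K hK1 S (fun i => X i ω) (fun i _ => hX01 i ω)
  have hval : ∫ ω, K * (1 - ∏ i ∈ S, Z i ω) ∂μ = K * (1 - ∏ i ∈ S, (1 - y i / K)) := by
    rw [integral_const_mul, integral_sub (integrable_const 1) (hprod S).1, integral_const,
      probReal_univ, one_smul, (hprod S).2]
  -- final estimate: ∏ (1 - y i / K) ≤ exp (-(∑ y)/K)
  have hexp : ∏ i ∈ S, (1 - y i / K) ≤ Real.exp (-(∑ i ∈ S, y i) / K) := by
    have h1 : ∏ i ∈ S, (1 - y i / K) ≤ ∏ i ∈ S, Real.exp (-(y i / K)) := by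
      refine Finset.prod_le_prod (fun i _ => ?_) (fun i _ => ?_)
      · have h1 : y i / K ≤ 1 := by
          rw [div_le_one hK0]; exact le_trans (hy i).2 hK1
        linarith
      · have := Real.add_one_le_exp (-(y i / K))
        linarith
    rw [← Real.exp_sum] at h1
    have h2 : ∑ i ∈ S, -(y i / K) = -(∑ i ∈ S, y i) / K := by
      rw [Finset.sum_neg_distrib, ← Finset.sum_div, neg_div]
    rwa [h2] at h1
  have hfinal : K * (1 - Real.exp (-(∑ i ∈ S, y i) / K))
      ≤ K * (1 - ∏ i ∈ S, (1 - y i / K)) := by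
    apply mul_le_mul_of_nonneg_left _ (le_of_lt hK0)
    linarith
  calc (K : ℝ) * (1 - Real.exp (-(∑ i ∈ S, y i) / K))
      ≤ K * (1 - ∏ i ∈ S, (1 - y i / K)) := hfinal
    _ = ∫ ω, K * (1 - ∏ i ∈ S, Z i ω) ∂μ := hval.symm
    _ ≤ ∫ ω, min K (∑ i ∈ S, X i ω) ∂μ := hmono
end

section
/- Let X_1,...,X_n be independent Bernoulli random variables with P[X_i = 1] = z_i·k where z_i ∈ [0,1/k] (equivalently, parameters y_i ∈ [0,1] with z_i = y_i/k). Then E[min{k, Σ_i X_i}] ≥ k·(1 − Π_i (1 − y_i/k)). -/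
open MeasureTheory ProbabilityTheory

/-- Weierstrass/Bernoulli inequality: `1 - ∑ a ≤ ∏ (1 - a)` for `a i ∈ [0,1]`. -/
lemma one_sub_sum_le_prod_one_sub' {ι : Type*} (s : Finset ι) (a : ι → ℝ)
    (h0 : ∀ i ∈ s, 0 ≤ a i) (h1 : ∀ i ∈ s, a i ≤ 1) :
    1 - ∑ i ∈ s, a i ≤ ∏ i ∈ s, (1 - a i) := by
  classical
  induction s using Finset.cons_induction with
  | empty => simp
  | cons j s hj ih =>
    rw [Finset.sum_cons, Finset.prod_cons]
    have h0' : ∀ i ∈ s, 0 ≤ a i := fun i hi => h0 i (Finset.mem_cons_of_mem hi)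
    have h1' : ∀ i ∈ s, a i ≤ 1 := fun i hi => h1 i (Finset.mem_cons_of_mem hi)
    have ihs := ih h0' h1'
    have hsum : 0 ≤ ∑ i ∈ s, a i := Finset.sum_nonneg h0'
    have haj0 : 0 ≤ a j := h0 j (Finset.mem_cons_self _ _)
    have haj1 : a j ≤ 1 := h1 j (Finset.mem_cons_self _ _)
    nlinarith [mul_nonneg haj0 hsum]

/-- Pointwise bound: for `x i ∈ {0,1}`, `k (1 - ∏ (1 - x i / k)) ≤ min k (∑ x i)`. -/
lemma pointwise_bound {n k : ℕ} (hk : 0 < k) (x : Fin n → ℝ)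
    (hx : ∀ i, x i = 0 ∨ x i = 1) :
    (k : ℝ) * (1 - ∏ i, (1 - x i / k)) ≤ min (k : ℝ) (∑ i, x i) := by
  have hkR : (0 : ℝ) < k := by exact_mod_cast hk
  have hk1 : (1 : ℝ) ≤ k := by exact_mod_cast hk
  have h0 : ∀ i ∈ Finset.univ, 0 ≤ x i / k := by
    intro i _; rcases hx i with h | h <;> rw [h] <;> positivity
  have h1 : ∀ i ∈ Finset.univ, x i / k ≤ 1 := by
    intro i _
    rcases hx i with h | h
    · simp [h]
    · rw [h, div_le_one hkR]; exact hk1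
  have hber := one_sub_sum_le_prod_one_sub' Finset.univ (fun i => x i / k) h0 h1
  have hprod0 : 0 ≤ ∏ i, (1 - x i / k) :=
    Finset.prod_nonneg fun i _ => by linarith [h1 i (Finset.mem_univ i)]
  refine le_min ?_ ?_
  · nlinarith
  · have hsum : ∑ i, x i / k = (∑ i, x i) / k := by rw [Finset.sum_div]
    rw [hsum] at hber
    have := mul_le_mul_of_nonneg_left hber (le_of_lt hkR)
    calc (k : ℝ) * (1 - ∏ i, (1 - x i / k)) ≤ (k : ℝ) * (1 - (1 - (∑ i, x i) / k)) := by
          nlinarith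
      _ = ∑ i, x i := by field_simp; ring
  
/-- Product-form bound for independent Bernoulli variables `X i` with `P[X i = 1] = y i`:
`E[min{k, Σ_i X_i}] ≥ k (1 − Π_i (1 − y_i/k))`. -/
theorem stmt_1 {Ω : Type*} [MeasurableSpace Ω] (μ : Measure Ω) [IsProbabilityMeasure μ]
    (n : ℕ) (y : Fin n → ℝ) (hy : ∀ i, y i ∈ Set.Icc (0 : ℝ) 1)
    (X : Fin n → Ω → ℝ) (hXmeas : ∀ i, Measurable (X i))
    (hX01 : ∀ i ω, X i ω = 0 ∨ X i ω = 1)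
    (hXmarg : ∀ i, μ {ω | X i ω = 1} = ENNReal.ofReal (y i))
    (hXindep : iIndepFun X μ)
    (k : ℕ) (hk : 0 < k) :
    ∫ ω, min (k : ℝ) (∑ i, X i ω) ∂μ ≥ (k : ℝ) * (1 - ∏ i, (1 - y i / k)) := by
  classical
  have hkR : (0 : ℝ) < k := by exact_mod_cast hk
  set Y : Fin n → Ω → ℝ := fun i ω => 1 - X i ω / k with hY
  have hYmeas : ∀ i, Measurable (Y i) := fun i =>
    (measurable_const.sub ((hXmeas i).div_const _))
  have hY01 : ∀ i ω, 0 ≤ Y i ω ∧ Y i ω ≤ 1 := by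
    intro i ω
    rcases hX01 i ω with h | h
    · simp [hY, h]
    · constructor
      · simp only [hY, h, sub_nonneg]
        rw [div_le_one hkR]; exact_mod_cast hk
      · simp only [hY, h]
        have : 0 ≤ 1 / (k : ℝ) := by positivity
        linarith
  have hYindep : iIndepFun Y μ := by
    have := hXindep.comp (g := fun _ (t : ℝ) => 1 - t / k)
      (fun i => measurable_const.sub (measurable_id.div_const _))
    exact this
  have hYint : ∀ i, Integrable (Y i) μ := by
    intro i
    refine Integrable.mono' (integrable_const 1) (hYmeas i).aestronglyMeasurable ?_
    filter_upwards with ω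
    rw [Real.norm_eq_abs, abs_le]
    constructor <;> linarith [(hY01 i ω).1, (hY01 i ω).2]
  -- expectation of each X i
  have hXint : ∀ i, ∫ ω, X i ω ∂μ = y i := by
    intro i
    have hAmeas : MeasurableSet {ω | X i ω = 1} := (hXmeas i) (measurableSet_singleton 1)
    have hXind : X i = Set.indicator {ω | X i ω = 1} (fun _ => (1 : ℝ)) := by
      ext ω
      rcases hX01 i ω with h | h
      · simp [Set.indicator, h]
      · simp [Set.indicator, h]
    rw [hXind, integral_indicator_const _ hAmeas]
    simp only [smul_eq_mul, mul_one]
    rw [measureReal_def, hXmarg i, ENNReal.toReal_ofReal (hy i).1]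
  have hXintg : ∀ i, Integrable (X i) μ := by
    intro i
    refine Integrable.mono' (integrable_const 1) (hXmeas i).aestronglyMeasurable ?_
    filter_upwards with ω
    rcases hX01 i ω with h | h <;> simp [h]
  have hYint_eq : ∀ i, ∫ ω, Y i ω ∂μ = 1 - y i / k := by
    intro i
    have hdiv : Integrable (fun ω => X i ω / k) μ := (hXintg i).div_const _
    rw [show (Y i) = (fun ω => (1:ℝ) - X i ω / k) from rfl]
    rw [integral_sub (integrable_const 1) hdiv]
    simp only [integral_const, measure_univ, probReal_univ, ENNReal.toReal_one, smul_eq_mul, mul_one]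
    rw [integral_div, hXint i]
  -- product of expectations by independence
  have hprodY : ∀ s : Finset (Fin n), ∫ ω, ∏ i ∈ s, Y i ω ∂μ = ∏ i ∈ s, ∫ ω, Y i ω ∂μ := by
    intro s
    induction s using Finset.cons_induction with
    | empty => simp
    | cons j s hj ih =>
      have heq : (∏ i ∈ s, Y i) = fun ω => ∏ i ∈ s, Y i ω :=
        funext fun ω => Finset.prod_apply ω s Y
      have hmeas_prod : Measurable (∏ i ∈ s, Y i) := by
        rw [heq]; exact Finset.measurable_prod _ fun i _ => hYmeas i
      have hint_prod : Integrable (∏ i ∈ s, Y i) μ := by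
        refine Integrable.mono' (integrable_const 1) hmeas_prod.aestronglyMeasurable ?_
        filter_upwards with ω
        rw [Real.norm_eq_abs, Finset.prod_apply, abs_of_nonneg
          (Finset.prod_nonneg fun i _ => (hY01 i ω).1)]
        exact Finset.prod_le_one (fun i _ => (hY01 i ω).1) (fun i _ => (hY01 i ω).2)
      have hindep : IndepFun (∏ i ∈ s, Y i) (Y j) μ :=
        hYindep.indepFun_finsetProd_of_notMem hYmeas hj
      have := hindep.integral_mul_eq_mul_integral hint_prod.aestronglyMeasurable (hYint j).aestronglyMeasurable
      simp only [Finset.prod_cons]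
      rw [← ih]
      calc ∫ ω, Y j ω * ∏ i ∈ s, Y i ω ∂μ
          = ∫ ω, (∏ i ∈ s, Y i) ω * Y j ω ∂μ := by
            congr 1; funext ω; rw [Finset.prod_apply]; ring
        _ = (∫ ω, (∏ i ∈ s, Y i) ω ∂μ) * ∫ ω, Y j ω ∂μ := this
        _ = (∫ ω, Y j ω ∂μ) * ∫ ω, ∏ i ∈ s, Y i ω ∂μ := by
            rw [mul_comm]; congr 1; apply integral_congr_ae
            filter_upwards with ω; rw [Finset.prod_apply]
  -- integrability of both sides
  have hSmeas : Measurable (fun ω => ∑ i, X i ω) := by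
    apply Finset.measurable_sum; intro i _; exact hXmeas i
  have hminmeas : Measurable (fun ω => min (k : ℝ) (∑ i, X i ω)) :=
    measurable_const.min hSmeas
  have hminint : Integrable (fun ω => min (k : ℝ) (∑ i, X i ω)) μ := by
    refine Integrable.mono' (integrable_const (k : ℝ)) hminmeas.aestronglyMeasurable ?_
    filter_upwards with ω
    rw [Real.norm_eq_abs, abs_le]
    have hS : 0 ≤ ∑ i, X i ω := Finset.sum_nonneg fun i _ => by
      rcases hX01 i ω with h | h <;> simp [h]
    constructor
    · refine le_min (neg_nonpos.mpr hkR.le |>.trans hkR.le) (le_trans ?_ hS); linarith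
    · exact min_le_left _ _
  have hprodmeas : Measurable (fun ω => ∏ i, Y i ω) := by
    apply Finset.measurable_prod; intro i _; exact hYmeas i
  have hip : Integrable (fun ω => ∏ i, Y i ω) μ := by
    refine Integrable.mono' (integrable_const 1) hprodmeas.aestronglyMeasurable ?_
    filter_upwards with ω
    rw [Real.norm_eq_abs, abs_of_nonneg (Finset.prod_nonneg fun i _ => (hY01 i ω).1)]
    exact Finset.prod_le_one (fun i _ => (hY01 i ω).1) (fun i _ => (hY01 i ω).2)
  have hprodint : Integrable (fun ω => (k : ℝ) * (1 - ∏ i, Y i ω)) μ :=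
    (((integrable_const 1).sub hip).const_mul _)
  -- main chain
  have hpt : ∀ ω, (k : ℝ) * (1 - ∏ i, Y i ω) ≤ min (k : ℝ) (∑ i, X i ω) := by
    intro ω
    exact pointwise_bound hk (fun i => X i ω) (fun i => hX01 i ω)
  have hmono : ∫ ω, (k : ℝ) * (1 - ∏ i, Y i ω) ∂μ
      ≤ ∫ ω, min (k : ℝ) (∑ i, X i ω) ∂μ :=
    integral_mono hprodint hminint hpt
  have hleft : ∫ ω, (k : ℝ) * (1 - ∏ i, Y i ω) ∂μ = (k : ℝ) * (1 - ∏ i, (1 - y i / k)) := by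
    rw [integral_const_mul, integral_sub (integrable_const 1) hip]
    simp only [integral_const, measure_univ, probReal_univ, ENNReal.toReal_one, smul_eq_mul, mul_one]
    rw [hprodY Finset.univ]
    congr 2
    exact Finset.prod_congr rfl fun i _ => hYint_eq i
  rw [ge_iff_le, ← hleft]
  exact hmono
end

section
/- Let g: {0,1}^n → ℝ be defined by g(x) = λ_{Σ_{i∈S} x_i} for a subset S of coordinates with |S| = s ≥ 2, where (λ_0,...,λ_s) satisfies λ_r − 2λ_{r+1} + λ_{r+2} ≤ 0 for all 0 ≤ r ≤ s−2. Fix two distinct indices i, j ∈ S and values v_p ∈ [0,1] for all p. Write Φ(v) = Σ_{ℓ=0}^{s} λ_ℓ Σ_{A⊆S, |A|=ℓ} Π_{a∈A} v_a · Π_{b∈S∖A}(1−v_b). Then Φ, viewed as a multilinear function, has coefficient u_3 of the monomial v_i·v_j (with other coordinates fixed) satisfying u_3 ≤ 0; specifically u_3 = Σ_{r=0}^{s−2} (λ_r − 2λ_{r+1} + λ_{r+2})·β_r where β_r = Σ_{B⊆S∖{i,j}, |B|=r} Π_{p∈B} v_p · Π_{q∈(S∖{i,j})∖B}(1−v_q)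 ≥ 0. -/
open Finset

/-- The multilinear potential `Φ(v) = Σ_ℓ λ_ℓ Σ_{A⊆S,|A|=ℓ} Π_{a∈A} v_a Π_{b∈S∖A}(1−v_b)`,
viewed as a function of the coordinates `v_i, v_j` (`i ≠ j` in `S`), has the form
`u₀ + u₁ v_i + u₂ v_j + u₃ v_i v_j` where
`u₃ = Σ_{r=0}^{s−2} (λ_r − 2λ_{r+1} + λ_{r+2}) β_r ≤ 0` with each `β_r ≥ 0`. -/
theorem stmt_4 {ι : Type*} [DecidableEq ι] (S : Finset ι) (hs : 2 ≤ S.card)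
    (lam : ℕ → ℝ)
    (hlam : ∀ r, r ≤ S.card - 2 → lam r - 2 * lam (r + 1) + lam (r + 2) ≤ 0)
    (i j : ι) (hi : i ∈ S) (hj : j ∈ S) (hij : i ≠ j)
    (v : ι → ℝ) (hv : ∀ p, v p ∈ Set.Icc (0 : ℝ) 1) :
    (∀ r : ℕ,
      0 ≤ ∑ B ∈ (S \ {i, j}).powersetCard r,
            (∏ p ∈ B, v p) * ∏ q ∈ (S \ {i, j}) \ B, (1 - v q)) ∧
    (∑ r ∈ Finset.range (S.card - 1),
        (lam r - 2 * lam (r + 1) + lam (r + 2)) *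
          ∑ B ∈ (S \ {i, j}).powersetCard r,
            (∏ p ∈ B, v p) * ∏ q ∈ (S \ {i, j}) \ B, (1 - v q)) ≤ 0 ∧
    ∃ u0 u1 u2 : ℝ, ∀ a b : ℝ,
      (∑ ℓ ∈ Finset.range (S.card + 1), lam ℓ *
          ∑ A ∈ S.powersetCard ℓ,
            (∏ p ∈ A, Function.update (Function.update v i a) j b p) *
              ∏ q ∈ S \ A, (1 - Function.update (Function.update v i a) j b q))
        = u0 + u1 * a + u2 * b +
          (∑ r ∈ Finset.range (S.card - 1),
            (lam r - 2 * lam (r + 1) + lam (r + 2)) *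
              ∑ B ∈ (S \ {i, j}).powersetCard r,
                (∏ p ∈ B, v p) * ∏ q ∈ (S \ {i, j}) \ B, (1 - v q)) * (a * b) := by
  classical
  set T : Finset ι := S \ {i, j} with hTdef
  have hiT : i ∉ T := by simp [hTdef]
  have hjT : j ∉ T := by simp [hTdef]
  have hijS : ({i, j} : Finset ι) ⊆ S := by
    intro x hx
    rcases Finset.mem_insert.mp hx with rfl | hx
    · exact hi
    · rw [Finset.mem_singleton.mp hx]; exact hj
  have hTcard : T.card = S.card - 2 := by
    rw [hTdef, Finset.card_sdiff_of_subset hijS, Finset.card_insert_of_notMem (by simp [hij]),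
      Finset.card_singleton]
  have hST : S = insert i (insert j T) := by
    ext x
    simp only [hTdef, Finset.mem_insert, Finset.mem_sdiff, Finset.mem_singleton]
    constructor
    · intro hx
      by_cases h1 : x = i
      · exact Or.inl h1
      by_cases h2 : x = j
      · exact Or.inr (Or.inl h2)
      · exact Or.inr (Or.inr ⟨hx, fun h => h.elim h1 h2⟩)
    · rintro (rfl | rfl | ⟨hx, _⟩)
      · exact hi
      · exact hj
      · exact hx
  have hi' : i ∉ insert j T := by simp [hij, hiT]
  -- the β_r's
  have hβ : ∀ r : ℕ,
      0 ≤ ∑ B ∈ T.powersetCard r, (∏ p ∈ B, v p) * ∏ q ∈ T \ B, (1 - v q) := by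
    intro r
    refine Finset.sum_nonneg fun B _ => mul_nonneg ?_ ?_
    · exact Finset.prod_nonneg fun p _ => (hv p).1
    · exact Finset.prod_nonneg fun q _ => by linarith [(hv q).2]
  refine ⟨hβ, ?_, ?_⟩
  · refine Finset.sum_nonpos fun r hr => ?_
    have hr' : r ≤ S.card - 2 := by
      have := Finset.mem_range.mp hr; omega
    exact mul_nonpos_of_nonpos_of_nonneg (hlam r hr') (hβ r)
  -- the main identity
  set w : Finset ι → ℝ := fun B => (∏ p ∈ B, v p) * ∏ q ∈ T \ B, (1 - v q) with hw
  refine ⟨∑ B ∈ T.powerset, lam B.card * w B,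
    ∑ B ∈ T.powerset, (lam (B.card + 1) - lam B.card) * w B,
    ∑ B ∈ T.powerset, (lam (B.card + 1) - lam B.card) * w B, fun a b => ?_⟩
  set f : ι → ℝ := Function.update (Function.update v i a) j b with hf
  have hfi : f i = a := by
    rw [hf, Function.update_of_ne hij, Function.update_self]
  have hfj : f j = b := by rw [hf, Function.update_self]
  have hfT : ∀ p ∈ T, f p = v p := by
    intro p hp
    have h1 : p ≠ j := fun h => hjT (h ▸ hp)
    have h2 : p ≠ i := fun h => hiT (h ▸ hp)
    rw [hf, Function.update_of_ne h1, Function.update_of_ne h2]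
  set g : Finset ι → ℝ := fun A => lam A.card * ((∏ p ∈ A, f p) * ∏ q ∈ S \ A, (1 - f q))
    with hg
  -- Step 1 : LHS as a sum over the powerset
  have h1 : (∑ ℓ ∈ Finset.range (S.card + 1), lam ℓ *
      ∑ A ∈ S.powersetCard ℓ, (∏ p ∈ A, f p) * ∏ q ∈ S \ A, (1 - f q))
      = ∑ A ∈ S.powerset, g A := by
    rw [Finset.sum_powerset]
    refine Finset.sum_congr rfl fun ℓ _ => ?_
    rw [Finset.mul_sum]
    refine Finset.sum_congr rfl fun A hA => ?_
    rw [hg]; simp only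
    rw [(Finset.mem_powersetCard.mp hA).2]
  -- per-B evaluations
  have hprodB : ∀ B ∈ T.powerset, (∏ p ∈ B, f p) = ∏ p ∈ B, v p := by
    intro B hB
    exact Finset.prod_congr rfl fun p hp => hfT p (Finset.mem_powerset.mp hB hp)
  have hprodTB : ∀ B : Finset ι, (∏ q ∈ T \ B, (1 - f q)) = ∏ q ∈ T \ B, (1 - v q) := by
    intro B
    exact Finset.prod_congr rfl fun q hq => by rw [hfT q (Finset.mem_sdiff.mp hq).1]
  have hsd : ∀ B ∈ T.powerset, S \ B = insert i (insert j (T \ B)) := by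
    intro B hB
    have hB' := Finset.mem_powerset.mp hB
    have hiB : i ∉ B := fun h => hiT (hB' h)
    have hjB : j ∉ B := fun h => hjT (hB' h)
    ext x
    simp only [hST, Finset.mem_sdiff, Finset.mem_insert]
    constructor
    · rintro ⟨h | h | h, hxB⟩
      · exact Or.inl h
      · exact Or.inr (Or.inl h)
      · exact Or.inr (Or.inr ⟨h, hxB⟩)
    · rintro (rfl | rfl | ⟨hx, hxB⟩)
      · exact ⟨Or.inl rfl, hiB⟩
      · exact ⟨Or.inr (Or.inl rfl), hjB⟩
      · exact ⟨Or.inr (Or.inr hx), hxB⟩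
  have hsdj : ∀ B ∈ T.powerset, S \ insert j B = insert i (T \ B) := by
    intro B hB
    rw [Finset.sdiff_insert, hsd B hB, Finset.erase_insert_of_ne hij,
      Finset.erase_insert (by simp [hjT])]
  have hsdi : ∀ B ∈ T.powerset, S \ insert i B = insert j (T \ B) := by
    intro B hB
    rw [Finset.sdiff_insert, hsd B hB, Finset.erase_insert (by simp [hij, hiT])]
  have hsdij : ∀ B ∈ T.powerset, S \ insert i (insert j B) = T \ B := by
    intro B hB
    rw [Finset.sdiff_insert, hsdj B hB, Finset.erase_insert (by simp [hiT])]
  have hiTB : ∀ B : Finset ι, i ∉ insert j (T \ B) := by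
    intro B; simp [hij, hiT]
  have hjTB : ∀ B : Finset ι, j ∉ T \ B := by
    intro B; simp [hjT]
  -- values of g on the four kinds of sets
  have hgB : ∀ B ∈ T.powerset, g B = lam B.card * ((1 - a) * ((1 - b) * w B)) := by
    intro B hB
    rw [hg]; simp only
    rw [hprodB B hB, hsd B hB, Finset.prod_insert (hiTB B), Finset.prod_insert (hjTB B),
      hprodTB B, hfi, hfj, hw]
    ring
  have hiB : ∀ B ∈ T.powerset, i ∉ B :=
    fun B hB h => hiT (Finset.mem_powerset.mp hB h)
  have hjB : ∀ B ∈ T.powerset, j ∉ B :=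
    fun B hB h => hjT (Finset.mem_powerset.mp hB h)
  have hgj : ∀ B ∈ T.powerset,
      g (insert j B) = lam (B.card + 1) * ((1 - a) * (b * w B)) := by
    intro B hB
    rw [hg]; simp only
    rw [Finset.card_insert_of_notMem (hjB B hB), Finset.prod_insert (hjB B hB),
      hprodB B hB, hsdj B hB, Finset.prod_insert (by simp [hij, hiT]),
      hprodTB B, hfi, hfj, hw]
    ring
  have hgi : ∀ B ∈ T.powerset,
      g (insert i B) = lam (B.card + 1) * (a * ((1 - b) * w B)) := by
    intro B hB
    rw [hg]; simp only
    rw [Finset.card_insert_of_notMem (hiB B hB), Finset.prod_insert (hiB B hB),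
      hprodB B hB, hsdi B hB, Finset.prod_insert (by simp [hjT]),
      hprodTB B, hfi, hfj, hw]
    ring
  have hgij : ∀ B ∈ T.powerset,
      g (insert i (insert j B)) = lam (B.card + 2) * (a * (b * w B)) := by
    intro B hB
    have hinotmem : i ∉ insert j B := by
      simp only [Finset.mem_insert]
      rintro (h | h)
      · exact hij h
      · exact hiB B hB h
    rw [hg]; simp only
    rw [Finset.card_insert_of_notMem hinotmem,
      Finset.card_insert_of_notMem (hjB B hB), Finset.prod_insert hinotmem,
      Finset.prod_insert (hjB B hB), hprodB B hB, hsdij B hB, hprodTB B, hfi, hfj, hw]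
    ring
  -- Step 2 : split the powerset sum
  have h2 : (∑ A ∈ S.powerset, g A)
      = ∑ B ∈ T.powerset,
          (g B + g (insert j B) + (g (insert i B) + g (insert i (insert j B)))) := by
    rw [hST] at *
    rw [Finset.sum_powerset_insert hi', Finset.sum_powerset_insert hjT,
      Finset.sum_powerset_insert hjT, ← Finset.sum_add_distrib, ← Finset.sum_add_distrib,
      ← Finset.sum_add_distrib]
  -- Step 3 : the u₃ coefficient as a powerset sum
  have h3 : (∑ r ∈ Finset.range (S.card - 1),
      (lam r - 2 * lam (r + 1) + lam (r + 2)) *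
        ∑ B ∈ T.powersetCard r, (∏ p ∈ B, v p) * ∏ q ∈ T \ B, (1 - v q))
      = ∑ B ∈ T.powerset, (lam B.card - 2 * lam (B.card + 1) + lam (B.card + 2)) * w B := by
    rw [Finset.sum_powerset]
    have hrange : Finset.range (S.card - 1) = Finset.range (T.card + 1) := by
      rw [hTcard]; congr 1; omega
    rw [hrange]
    refine Finset.sum_congr rfl fun r _ => ?_
    rw [Finset.mul_sum]
    refine Finset.sum_congr rfl fun B hB => ?_
    rw [(Finset.mem_powersetCard.mp hB).2, hw]
  rw [h1, h2, h3, Finset.sum_mul, Finset.sum_mul, Finset.sum_mul, ← Finset.sum_add_distrib,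
    ← Finset.sum_add_distrib, ← Finset.sum_add_distrib]
  refine Finset.sum_congr rfl fun B hB => ?_
  rw [hgB B hB, hgj B hB, hgi B hB, hgij B hB]
  ring
end

section
/- There exists γ_0 ∈ (1, 2) such that γ_0 = (1/e + 2/e^{γ_0})·(1 + 1/(γ_0 − 1)), and this γ_0 satisfies γ_0 < 1.7245. -/
open Real

theorem stmt_10 : ∃ γ₀ : ℝ, 1 < γ₀ ∧ γ₀ < 2 ∧
    γ₀ = (1 / Real.exp 1 + 2 / Real.exp γ₀) * (1 + 1 / (γ₀ - 1)) ∧ γ₀ < 1.7245 := by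
  set f : ℝ → ℝ := fun x => 1 / Real.exp 1 + 2 / Real.exp x - (x - 1) with hf
  have hcont : ContinuousOn f (Set.Icc (1.1 : ℝ) 1.7245) := by
    apply ContinuousOn.sub
    · apply ContinuousOn.add continuousOn_const
      exact (continuousOn_const.div (Real.continuous_exp.continuousOn)
        (fun x _ => (Real.exp_pos x).ne'))
    · fun_prop
  have he1 : Real.exp 1 < 2.7182818286 := Real.exp_one_lt_d9
  have he2 : (2.7182818283 : ℝ) < Real.exp 1 := Real.exp_one_gt_d9
  have hfa : 0 < f 1.1 := by
    have h1 : (0.1 : ℝ) < 1 / Real.exp 1 := by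
      rw [lt_div_iff₀ (Real.exp_pos 1)]; nlinarith
    have h2 : 0 < 2 / Real.exp 1.1 := by positivity
    simp only [hf]; nlinarith
  have hfb : f 1.7245 < 0 := by
    have htaylor : (2.0634752 : ℝ) < Real.exp 0.7245 := by
      have := Real.sum_le_exp_of_nonneg (x := 0.7245) (by norm_num) 6
      have hsum : (2.0634752 : ℝ) < ∑ i ∈ Finset.range 6, (0.7245:ℝ) ^ i / (i.factorial:ℝ) := by
        simp [Finset.sum_range_succ, Nat.factorial]
        norm_num
      linarith
    have hexp : (5.6089 : ℝ) < Real.exp 1.7245 := by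
      have : Real.exp 1.7245 = Real.exp 1 * Real.exp 0.7245 := by
        rw [← Real.exp_add]; norm_num
      rw [this]; nlinarith [Real.exp_pos (0.7245:ℝ)]
    have h1 : 1 / Real.exp 1 < 0.3678795 := by
      rw [div_lt_iff₀ (Real.exp_pos 1)]; nlinarith
    have h2 : 2 / Real.exp 1.7245 < 0.356577 := by
      rw [div_lt_iff₀ (Real.exp_pos 1.7245)]; nlinarith
    simp only [hf]; nlinarith
  have hab : (1.1 : ℝ) ≤ 1.7245 := by norm_num
  have := intermediate_value_Ioo' hab hcont (a := 1.1) (b := 1.7245)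
  have h0 : (0 : ℝ) ∈ Set.Ioo (f 1.7245) (f 1.1) := ⟨hfb, hfa⟩
  obtain ⟨γ₀, hγ, hfγ⟩ := this h0
  refine ⟨γ₀, by linarith [hγ.1], by linarith [hγ.2], ?_, hγ.2⟩
  have hγ1 : (1:ℝ) < γ₀ := by linarith [hγ.1]
  have hne : γ₀ - 1 ≠ 0 := by linarith [hγ.1]
  have heq : 1 / Real.exp 1 + 2 / Real.exp γ₀ = γ₀ - 1 := by
    simp only [hf] at hfγ; linarith
  rw [heq]
  field_simp
  ring
end

section
/- Let (λ_0,...,λ_s) satisfy λ_r − 2λ_{r+1} + λ_{r+2} ≤ 0 for all 0 ≤ r ≤ s−2 (s ≥ 2), and let dependent rounding be applied to y ∈ [0,1]^N producing ŷ ∈ {0,1}^N, with R(y) denoting independent rounding. Then for any S ⊆ [N] with |S| = s, E[λ_{Sum_S(ŷ)}] ≥ E[λ_{Sum_S(R(y))}], where Sum_S(x) = Σ_{i∈S} x_i. -/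
open MeasureTheory ProbabilityTheory Finset

/-- Multilinear extension of `A ↦ lam |A|` over the coordinates in `S`. -/
noncomputable def DRf {N : ℕ} (S : Finset (Fin N)) (lam : ℕ → ℝ) (x : Fin N → ℝ) : ℝ :=
  ∑ A ∈ S.powerset, lam A.card * ((∏ a ∈ A, x a) * ∏ b ∈ S \ A, (1 - x b))

/-- Discrete second difference of the multilinear extension. -/
noncomputable def DRd {N : ℕ} (T : Finset (Fin N)) (lam : ℕ → ℝ) (x : Fin N → ℝ) : ℝ :=
  DRf T lam x - 2 * DRf T (fun n => lam (n + 1)) x + DRf T (fun n => lam (n + 1 + 1)) x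

lemma DRf_congr {N : ℕ} {S : Finset (Fin N)} {lam : ℕ → ℝ} {x x' : Fin N → ℝ}
    (h : ∀ i ∈ S, x i = x' i) : DRf S lam x = DRf S lam x' := by
  unfold DRf
  refine Finset.sum_congr rfl fun A hA => ?_
  have hAS := Finset.mem_powerset.mp hA
  rw [show (∏ a ∈ A, x a) = ∏ a ∈ A, x' a from
      Finset.prod_congr rfl fun a ha => h a (hAS ha),
    show (∏ b ∈ S \ A, (1 - x b)) = ∏ b ∈ S \ A, (1 - x' b) from
      Finset.prod_congr rfl fun b hb => by rw [h b (Finset.mem_sdiff.mp hb).1]]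

lemma DRf_split {N : ℕ} {S : Finset (Fin N)} {lam : ℕ → ℝ} {x : Fin N → ℝ} {i : Fin N}
    (hi : i ∈ S) :
    DRf S lam x = (1 - x i) * DRf (S.erase i) lam x
      + x i * DRf (S.erase i) (fun n => lam (n + 1)) x := by
  classical
  have hiE : i ∉ S.erase i := Finset.notMem_erase i S
  unfold DRf
  rw [Finset.mul_sum, Finset.mul_sum]
  conv_lhs => rw [(Finset.insert_erase hi).symm]
  rw [Finset.sum_powerset_insert hiE]
  congr 1
  · refine Finset.sum_congr rfl fun A hA => ?_
    have hAE := Finset.mem_powerset.mp hA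
    have hiA : i ∉ A := fun h => hiE (hAE h)
    have hset : insert i (S.erase i) \ A = insert i (S.erase i \ A) := by
      ext p
      simp only [Finset.mem_sdiff, Finset.mem_insert]
      constructor
      · rintro ⟨hp | hp, hpA⟩
        · exact Or.inl hp
        · exact Or.inr ⟨hp, hpA⟩
      · rintro (hp | ⟨hp, hpA⟩)
        · exact ⟨Or.inl hp, fun hmem => hiA (hp ▸ hmem)⟩
        · exact ⟨Or.inr hp, hpA⟩
    rw [hset, Finset.prod_insert (fun h => hiE (Finset.mem_sdiff.mp h).1)]
    ring
  · refine Finset.sum_congr rfl fun A hA => ?_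
    have hAE := Finset.mem_powerset.mp hA
    have hiA : i ∉ A := fun h => hiE (hAE h)
    have hset : insert i (S.erase i) \ insert i A = S.erase i \ A := by
      ext p
      simp only [Finset.mem_sdiff, Finset.mem_insert]
      constructor
      · rintro ⟨hp | hp, hpA⟩
        · exact absurd (Or.inl hp) hpA
        · exact ⟨hp, fun hmem => hpA (Or.inr hmem)⟩
      · rintro ⟨hp, hpA⟩
        exact ⟨Or.inr hp, by
          rintro (rfl | hmem)
          · exact hiE hp
          · exact hpA hmem⟩
    rw [hset, Finset.prod_insert hiA, Finset.card_insert_of_notMem hiA]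
    ring

lemma DRf_abs_le {N : ℕ} {S : Finset (Fin N)} {lam : ℕ → ℝ} {x : Fin N → ℝ}
    (hx : ∀ i, x i ∈ Set.Icc (0:ℝ) 1) :
    |DRf S lam x| ≤ ∑ A ∈ S.powerset, |lam A.card| := by
  refine (Finset.abs_sum_le_sum_abs _ _).trans (Finset.sum_le_sum fun A _ => ?_)
  rw [abs_mul]
  have h1 : 0 ≤ ∏ a ∈ A, x a := Finset.prod_nonneg fun a _ => (hx a).1
  have h2 : ∏ a ∈ A, x a ≤ 1 := Finset.prod_le_one (fun a _ => (hx a).1) (fun a _ => (hx a).2)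
  have h3 : 0 ≤ ∏ b ∈ S \ A, (1 - x b) :=
    Finset.prod_nonneg fun b _ => by linarith [(hx b).2]
  have h4 : ∏ b ∈ S \ A, (1 - x b) ≤ 1 :=
    Finset.prod_le_one (fun b _ => by linarith [(hx b).2]) (fun b _ => by linarith [(hx b).1])
  have hp : |(∏ a ∈ A, x a) * ∏ b ∈ S \ A, (1 - x b)| ≤ 1 := by
    rw [abs_mul, abs_of_nonneg h1, abs_of_nonneg h3]
    nlinarith
  calc |lam A.card| * |(∏ a ∈ A, x a) * ∏ b ∈ S \ A, (1 - x b)|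
      ≤ |lam A.card| * 1 := mul_le_mul_of_nonneg_left hp (abs_nonneg _)
    _ = |lam A.card| := mul_one _

lemma DRf_measurable {N : ℕ} (S : Finset (Fin N)) (lam : ℕ → ℝ) :
    Measurable (DRf S lam) := by
  unfold DRf
  exact Finset.measurable_sum _ fun A _ =>
    measurable_const.mul ((Finset.measurable_prod _ fun a _ => measurable_pi_apply a).mul
      (Finset.measurable_prod _ fun b _ => (measurable_const.sub (measurable_pi_apply b) :
        Measurable fun x : Fin N → ℝ => 1 - x b)))

lemma DRd_measurable {N : ℕ} (T : Finset (Fin N)) (lam : ℕ → ℝ) :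
    Measurable (DRd T lam) := by
  unfold DRd
  exact ((DRf_measurable T lam).sub (measurable_const.mul
    (DRf_measurable T fun n => lam (n+1)))).add (DRf_measurable T fun n => lam (n+1+1))

lemma DRd_abs_le {N : ℕ} {T : Finset (Fin N)} {lam : ℕ → ℝ} {x : Fin N → ℝ}
    (hx : ∀ i, x i ∈ Set.Icc (0:ℝ) 1) :
    |DRd T lam x| ≤ (∑ A ∈ T.powerset, |lam A.card|)
      + 2 * (∑ A ∈ T.powerset, |lam (A.card + 1)|)
      + ∑ A ∈ T.powerset, |lam (A.card + 1 + 1)| := by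
  have h1 := abs_le.mp (DRf_abs_le (S := T) (lam := lam) hx)
  have h2 := abs_le.mp (DRf_abs_le (S := T) (lam := fun n => lam (n+1)) hx)
  have h3 := abs_le.mp (DRf_abs_le (S := T) (lam := fun n => lam (n+1+1)) hx)
  unfold DRd
  rw [abs_le]
  constructor <;> [linarith; linarith]

lemma DRd_nonpos {N : ℕ} {T : Finset (Fin N)} {lam : ℕ → ℝ} {x : Fin N → ℝ} {c : ℕ}
    (hlam : ∀ r, r ≤ c → lam r - 2 * lam (r + 1) + lam (r + 2) ≤ 0)
    (hc : T.card ≤ c) (hx : ∀ i, x i ∈ Set.Icc (0:ℝ) 1) :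
    DRd T lam x ≤ 0 := by
  have hrw : DRd T lam x = ∑ A ∈ T.powerset,
      (lam A.card - 2 * lam (A.card + 1) + lam (A.card + 2)) *
        ((∏ a ∈ A, x a) * ∏ b ∈ T \ A, (1 - x b)) := by
    unfold DRd DRf
    rw [Finset.mul_sum, ← Finset.sum_sub_distrib, ← Finset.sum_add_distrib]
    exact Finset.sum_congr rfl fun A _ => by ring_nf
  rw [hrw]
  refine Finset.sum_nonpos fun A hA => ?_
  have hcard : A.card ≤ c :=
    le_trans (Finset.card_le_card (Finset.mem_powerset.mp hA)) hc
  refine mul_nonpos_of_nonpos_of_nonneg (hlam _ hcard)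
    (mul_nonneg (Finset.prod_nonneg fun a _ => (hx a).1)
      (Finset.prod_nonneg fun b _ => by linarith [(hx b).2]))

lemma DRf_pair {N : ℕ} {S : Finset (Fin N)} {lam : ℕ → ℝ} {i j : Fin N}
    (hi : i ∈ S) (hj : j ∈ S) (hij : i ≠ j) {x x' : Fin N → ℝ}
    (hoff : ∀ p, p ≠ i → p ≠ j → x' p = x p) (hsumij : x' i + x' j = x i + x j) :
    DRf S lam x' = DRf S lam x
      + (x' i * x' j - x i * x j) * DRd ((S.erase i).erase j) lam x := by
  classical
  have hjE : j ∈ S.erase i := Finset.mem_erase.mpr ⟨hij.symm, hj⟩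
  have hcongrT : ∀ g : ℕ → ℝ, DRf ((S.erase i).erase j) g x' = DRf ((S.erase i).erase j) g x := by
    intro g
    refine (DRf_congr fun p hp => ?_).symm
    have hpj : p ≠ j := (Finset.mem_erase.mp hp).1
    have hpi : p ≠ i := (Finset.mem_erase.mp (Finset.mem_erase.mp hp).2).1
    exact (hoff p hpi hpj).symm
  have e1 : DRf S lam x = (1 - x i) * DRf (S.erase i) lam x
      + x i * DRf (S.erase i) (fun n => lam (n + 1)) x := DRf_split hi
  have e1' : DRf S lam x' = (1 - x' i) * DRf (S.erase i) lam x'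
      + x' i * DRf (S.erase i) (fun n => lam (n + 1)) x' := DRf_split hi
  have e2 : DRf (S.erase i) lam x = (1 - x j) * DRf ((S.erase i).erase j) lam x
      + x j * DRf ((S.erase i).erase j) (fun n => lam (n + 1)) x := DRf_split hjE
  have e2' : DRf (S.erase i) lam x' = (1 - x' j) * DRf ((S.erase i).erase j) lam x'
      + x' j * DRf ((S.erase i).erase j) (fun n => lam (n + 1)) x' := DRf_split hjE
  have e3 : DRf (S.erase i) (fun n => lam (n + 1)) x
      = (1 - x j) * DRf ((S.erase i).erase j) (fun n => lam (n + 1)) x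
      + x j * DRf ((S.erase i).erase j) (fun n => lam (n + 1 + 1)) x := DRf_split hjE
  have e3' : DRf (S.erase i) (fun n => lam (n + 1)) x'
      = (1 - x' j) * DRf ((S.erase i).erase j) (fun n => lam (n + 1)) x'
      + x' j * DRf ((S.erase i).erase j) (fun n => lam (n + 1 + 1)) x' := DRf_split hjE
  rw [e1, e1', e2, e2', e3, e3', hcongrT lam, hcongrT (fun n => lam (n + 1)),
    hcongrT (fun n => lam (n + 1 + 1))]
  unfold DRd
  linear_combination (DRf ((S.erase i).erase j) (fun n => lam (n + 1)) x
    - DRf ((S.erase i).erase j) lam x) * hsumij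

lemma DRf_of_01 {N : ℕ} {S : Finset (Fin N)} {lam : ℕ → ℝ} {x : Fin N → ℝ}
    (hx : ∀ i ∈ S, x i = 0 ∨ x i = 1) :
    DRf S lam x
      = ∑ ℓ ∈ Finset.range (S.card + 1),
          if (∑ i ∈ S, x i) = (ℓ : ℝ) then lam ℓ else 0 := by
  classical
  set A0 : Finset (Fin N) := S.filter (fun i => x i = 1) with hA0
  have hsum : (∑ i ∈ S, x i) = (A0.card : ℝ) := by
    rw [← Finset.sum_filter_add_sum_filter_not S (fun i => x i = 1)]
    have h1 : ∑ i ∈ S.filter (fun i => x i = 1), x i = (A0.card : ℝ) := by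
      rw [Finset.sum_congr rfl (fun i hi => (Finset.mem_filter.mp hi).2)]
      simp [hA0]
    have h2 : ∑ i ∈ S.filter (fun i => ¬ x i = 1), x i = 0 := by
      refine Finset.sum_eq_zero fun i hi => ?_
      rcases hx i (Finset.mem_filter.mp hi).1 with h | h
      · exact h
      · exact absurd h (Finset.mem_filter.mp hi).2
    rw [h1, h2, add_zero]
  have hDR : DRf S lam x = lam A0.card := by
    unfold DRf
    rw [Finset.sum_eq_single A0]
    · have hp1 : (∏ a ∈ A0, x a) = 1 :=
        Finset.prod_eq_one fun a ha => (Finset.mem_filter.mp ha).2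
      have hp2 : (∏ b ∈ S \ A0, (1 - x b)) = 1 := by
        refine Finset.prod_eq_one fun b hb => ?_
        have hbS := (Finset.mem_sdiff.mp hb).1
        have hbA := (Finset.mem_sdiff.mp hb).2
        rcases hx b hbS with h | h
        · rw [h]; ring
        · exact absurd (Finset.mem_filter.mpr ⟨hbS, h⟩) hbA
      rw [hp1, hp2]; ring
    · intro A hA hne
      by_cases hsub : A ⊆ A0
      · have hne' : A0 \ A ≠ ∅ := by
          intro he
          refine hne (Finset.Subset.antisymm hsub ?_)
          intro a ha
          by_contra haA
          exact (Finset.notMem_empty a) (he ▸ Finset.mem_sdiff.mpr ⟨ha, haA⟩)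
        obtain ⟨a, ha⟩ := Finset.nonempty_iff_ne_empty.mpr hne'
        have haA0 := (Finset.mem_sdiff.mp ha).1
        have haA := (Finset.mem_sdiff.mp ha).2
        have haS : a ∈ S := (Finset.filter_subset _ _) haA0
        have hx1 : x a = 1 := (Finset.mem_filter.mp haA0).2
        have hz : (∏ b ∈ S \ A, (1 - x b)) = 0 :=
          Finset.prod_eq_zero (Finset.mem_sdiff.mpr ⟨haS, haA⟩) (by rw [hx1]; ring)
        rw [hz]; ring
      · obtain ⟨a, haA, haA0⟩ := Finset.not_subset.mp hsub
        have haS : a ∈ S := (Finset.mem_powerset.mp hA) haA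
        have hx0 : x a = 0 := by
          rcases hx a haS with h | h
          · exact h
          · exact absurd (Finset.mem_filter.mpr ⟨haS, h⟩) haA0
        have hz : (∏ a ∈ A, x a) = 0 := Finset.prod_eq_zero haA hx0
        rw [hz]; ring
    · intro h
      exact absurd (Finset.mem_powerset.mpr (Finset.filter_subset _ _)) h
  have hcard : A0.card ∈ Finset.range (S.card + 1) :=
    Finset.mem_range.mpr (Nat.lt_succ_of_le (Finset.card_le_card (Finset.filter_subset _ _)))
  rw [hDR, hsum]
  rw [Finset.sum_eq_single A0.card]
  · simp
  · intro ℓ _ hne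
    rw [if_neg]
    exact fun h => hne (Nat.cast_injective h).symm
  · intro h; exact absurd hcard h
/-- Theorem 1 of the paper: if `(λ_0,…)` is discretely concave
(`λ_r − 2λ_{r+1} + λ_{r+2} ≤ 0`), then dependent rounding — axiomatized as a process
`v 0 = y, …, v m = ŷ ∈ {0,1}^N` in which each step alters only two coordinates,
preserves their sum surely, preserves their conditional expectations given the current
state, and is negatively correlated on the altered pair — yields
`E[λ_{Sum_S(ŷ)}] ≥ E[λ_{Sum_S(R(y))}]`, where the right-hand side is the multilinear
extension `Σ_ℓ λ_ℓ Σ_{A⊆S,|A|=ℓ} Π_{a∈A} y_a Π_{b∈S∖A}(1−y_b)`, i.e. the expectation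
under independent rounding. -/
theorem stmt_13 {Ω : Type*} [MeasurableSpace Ω] (μ : Measure Ω) [IsProbabilityMeasure μ]
    (N m : ℕ) (y : Fin N → ℝ) (hy : ∀ i, y i ∈ Set.Icc (0 : ℝ) 1)
    (v : ℕ → Ω → Fin N → ℝ)
    (hvmeas : ∀ t, Measurable (v t))
    (hv0 : ∀ ω, v 0 ω = y)
    (hvrange : ∀ t ω i, v t ω i ∈ Set.Icc (0 : ℝ) 1)
    (hstep : ∀ t < m, ∃ i j : Fin N, i ≠ j ∧
      (∀ ω, ∀ p, p ≠ i → p ≠ j → v (t + 1) ω p = v t ω p) ∧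
      (∀ ω, v (t + 1) ω i + v (t + 1) ω j = v t ω i + v t ω j) ∧
      (μ[(fun ω => v (t + 1) ω i) | MeasurableSpace.comap (v t) inferInstance]
        =ᵐ[μ] fun ω => v t ω i) ∧
      (μ[(fun ω => v (t + 1) ω i * v (t + 1) ω j) | MeasurableSpace.comap (v t) inferInstance]
        ≤ᵐ[μ] fun ω => v t ω i * v t ω j))
    (h01 : ∀ ω i, v m ω i = 0 ∨ v m ω i = 1)
    (S : Finset (Fin N)) (hS : 2 ≤ S.card)
    (lam : ℕ → ℝ)
    (hlam : ∀ r, r ≤ S.card - 2 → lam r - 2 * lam (r + 1) + lam (r + 2) ≤ 0) :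
    ∫ ω, (∑ ℓ ∈ Finset.range (S.card + 1),
            if (∑ i ∈ S, v m ω i) = (ℓ : ℝ) then lam ℓ else 0) ∂μ
      ≥ ∑ ℓ ∈ Finset.range (S.card + 1), lam ℓ *
          ∑ A ∈ S.powersetCard ℓ, (∏ a ∈ A, y a) * ∏ b ∈ S \ A, (1 - y b) := by
  classical
  -- generic integrability of bounded measurable functions
  have hbd : ∀ (f : Ω → ℝ) (C : ℝ), Measurable f → (∀ ω, |f ω| ≤ C) → Integrable f μ := by
    intro f C hf hC
    refine Integrable.mono' (integrable_const C) hf.aestronglyMeasurable ?_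
    exact Filter.Eventually.of_forall fun ω => by rw [Real.norm_eq_abs]; exact hC ω
  -- |v t ω i| ≤ 1
  have habs1 : ∀ t ω (i : Fin N), |v t ω i| ≤ 1 := fun t ω i =>
    abs_le.mpr ⟨by linarith [(hvrange t ω i).1], (hvrange t ω i).2⟩
  -- Step inequality
  have key : ∀ t, t < m →
      ∫ ω, DRf S lam (v t ω) ∂μ ≤ ∫ ω, DRf S lam (v (t + 1) ω) ∂μ := by
    intro t ht
    obtain ⟨i, j, hij, hoth, hsumij, hmarg, hcov⟩ := hstep t ht
    have hle : MeasurableSpace.comap (v t) inferInstance ≤ _ := (hvmeas t).comap_le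
    haveI : SigmaFinite (μ.trim hle) := by
      haveI : IsFiniteMeasure (μ.trim hle) := isFiniteMeasure_trim hle
      infer_instance
    have hvt_meas : @Measurable Ω (Fin N → ℝ) (MeasurableSpace.comap (v t) inferInstance) _
        (v t) := Measurable.of_comap_le le_rfl
    -- generic pull-out computation
    have pull : ∀ (h : (Fin N → ℝ) → ℝ) (C : ℝ), Measurable h →
        (∀ x, (∀ p, x p ∈ Set.Icc (0:ℝ) 1) → |h x| ≤ C) →
        ∀ (X : Ω → ℝ), Measurable X → (∀ ω, |X ω| ≤ 1) →
        ∫ ω, h (v t ω) * X ω ∂μ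
          = ∫ ω, h (v t ω) *
              (μ[X | MeasurableSpace.comap (v t) inferInstance]) ω ∂μ := by
      intro h C hh hhC X hX hX1
      have hCnn : 0 ≤ C := le_trans (abs_nonneg _) (hhC _ (fun p => ⟨le_rfl, zero_le_one⟩))
      have hbdh : ∀ ω, |h (v t ω)| ≤ C := fun ω => hhC _ (fun p => hvrange t ω p)
      have hintX : Integrable X μ := hbd X 1 hX hX1
      have hfg : Integrable ((fun ω => h (v t ω)) * X) μ := by
        refine hbd _ C ((hh.comp (hvmeas t)).mul hX) fun ω => ?_
        simp only [Pi.mul_apply, abs_mul]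
        calc |h (v t ω)| * |X ω| ≤ C * 1 :=
          mul_le_mul (hbdh ω) (hX1 ω) (abs_nonneg _) hCnn
        _ = C := mul_one C
      have hsm : StronglyMeasurable[MeasurableSpace.comap (v t) inferInstance]
          (fun ω => h (v t ω)) := (hh.comp hvt_meas).stronglyMeasurable
      have hpull := condExp_mul_of_stronglyMeasurable_left hsm hfg hintX
      calc ∫ ω, h (v t ω) * X ω ∂μ
          = ∫ ω, ((fun ω => h (v t ω)) * X) ω ∂μ := rfl
        _ = ∫ ω, (μ[(fun ω => h (v t ω)) * X
              | MeasurableSpace.comap (v t) inferInstance]) ω ∂μ :=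
            (integral_condExp (f := (fun ω => h (v t ω)) * X) hle).symm
        _ = ∫ ω, ((fun ω => h (v t ω)) *
              μ[X | MeasurableSpace.comap (v t) inferInstance]) ω ∂μ :=
            integral_congr_ae hpull
        _ = ∫ ω, h (v t ω) *
              (μ[X | MeasurableSpace.comap (v t) inferInstance]) ω ∂μ := rfl
    by_cases hiS : i ∈ S <;> by_cases hjS : j ∈ S
    · -- both in S
      set T := (S.erase i).erase j with hT
      have hjE : j ∈ S.erase i := Finset.mem_erase.mpr ⟨hij.symm, hjS⟩
      have hTcard : T.card ≤ S.card - 2 := by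
        rw [hT, Finset.card_erase_of_mem hjE, Finset.card_erase_of_mem hiS]
        omega
      have hpt : ∀ ω, DRf S lam (v (t + 1) ω) = DRf S lam (v t ω)
          + (v (t + 1) ω i * v (t + 1) ω j - v t ω i * v t ω j) * DRd T lam (v t ω) :=
        fun ω => DRf_pair hiS hjS hij (hoth ω) (hsumij ω)
      set CD := (∑ A ∈ T.powerset, |lam A.card|)
        + 2 * (∑ A ∈ T.powerset, |lam (A.card + 1)|)
        + ∑ A ∈ T.powerset, |lam (A.card + 1 + 1)| with hCD
      have hDbd : ∀ x : Fin N → ℝ, (∀ p, x p ∈ Set.Icc (0:ℝ) 1) → |DRd T lam x| ≤ CD :=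
        fun x hx => DRd_abs_le hx
      have hDle : ∀ ω, DRd T lam (v t ω) ≤ 0 :=
        fun ω => DRd_nonpos hlam hTcard (fun p => hvrange t ω p)
      have hXmeas : Measurable (fun ω => v (t + 1) ω i * v (t + 1) ω j) :=
        ((measurable_pi_apply i).comp (hvmeas (t + 1))).mul
          ((measurable_pi_apply j).comp (hvmeas (t + 1)))
      have hXbd : ∀ ω, |v (t + 1) ω i * v (t + 1) ω j| ≤ 1 := fun ω => by
        rw [abs_mul]
        calc |v (t+1) ω i| * |v (t+1) ω j| ≤ 1 * 1 :=
          mul_le_mul (habs1 _ _ _) (habs1 _ _ _) (abs_nonneg _) zero_le_one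
        _ = 1 := mul_one 1
      have hYmeas : Measurable (fun ω => v t ω i * v t ω j) :=
        ((measurable_pi_apply i).comp (hvmeas t)).mul
          ((measurable_pi_apply j).comp (hvmeas t))
      have hYbd : ∀ ω, |v t ω i * v t ω j| ≤ 1 := fun ω => by
        rw [abs_mul]
        calc |v t ω i| * |v t ω j| ≤ 1 * 1 :=
          mul_le_mul (habs1 _ _ _) (habs1 _ _ _) (abs_nonneg _) zero_le_one
        _ = 1 := mul_one 1
      have hCDnn : 0 ≤ CD := le_trans (abs_nonneg _)
        (hDbd (fun _ => 0) (fun p => ⟨le_rfl, zero_le_one⟩))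
      have hprodbd : ∀ (Z : Ω → ℝ), (∀ ω, |Z ω| ≤ 1) →
          ∀ ω, |DRd T lam (v t ω) * Z ω| ≤ CD := by
        intro Z hZ ω
        rw [abs_mul]
        calc |DRd T lam (v t ω)| * |Z ω| ≤ CD * 1 :=
          mul_le_mul (hDbd _ (fun p => hvrange t ω p)) (hZ ω) (abs_nonneg _) hCDnn
        _ = CD := mul_one CD
      have hint1 : Integrable (fun ω => DRf S lam (v t ω)) μ :=
        hbd _ _ ((DRf_measurable S lam).comp (hvmeas t))
          (fun ω => DRf_abs_le (fun p => hvrange t ω p))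
      have hint2 : Integrable
          (fun ω => DRd T lam (v t ω) * (v (t + 1) ω i * v (t + 1) ω j)) μ :=
        hbd _ CD (((DRd_measurable T lam).comp (hvmeas t)).mul hXmeas) (hprodbd _ hXbd)
      have hint3 : Integrable (fun ω => DRd T lam (v t ω) * (v t ω i * v t ω j)) μ :=
        hbd _ CD (((DRd_measurable T lam).comp (hvmeas t)).mul hYmeas) (hprodbd _ hYbd)
      have hmono : ∫ ω, DRd T lam (v t ω) * (v t ω i * v t ω j) ∂μ
          ≤ ∫ ω, DRd T lam (v t ω) * (v (t + 1) ω i * v (t + 1) ω j) ∂μ := by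
        rw [pull (DRd T lam) CD (DRd_measurable T lam) (fun x hx => DRd_abs_le hx)
          (fun ω => v (t + 1) ω i * v (t + 1) ω j) hXmeas hXbd]
        refine integral_mono_ae hint3 ?_ ?_
        · refine Integrable.bdd_mul integrable_condExp
            (((DRd_measurable T lam).comp (hvmeas t)).aestronglyMeasurable) (c := CD) (Filter.Eventually.of_forall fun ω => ?_)
          rw [Real.norm_eq_abs]; exact hDbd _ (fun p => hvrange t ω p)
        · filter_upwards [hcov] with ω hω
          exact mul_le_mul_of_nonpos_left hω (hDle ω)
      calc ∫ ω, DRf S lam (v t ω) ∂μ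
          ≤ ∫ ω, DRf S lam (v t ω) ∂μ
            + (∫ ω, DRd T lam (v t ω) * (v (t + 1) ω i * v (t + 1) ω j) ∂μ
              - ∫ ω, DRd T lam (v t ω) * (v t ω i * v t ω j) ∂μ) := by linarith
        _ = ∫ ω, (DRf S lam (v t ω)
              + (DRd T lam (v t ω) * (v (t + 1) ω i * v (t + 1) ω j)
                - DRd T lam (v t ω) * (v t ω i * v t ω j))) ∂μ := by
            have hint23 : Integrable (fun ω => DRd T lam (v t ω) * (v (t + 1) ω i * v (t + 1) ω j)
                - DRd T lam (v t ω) * (v t ω i * v t ω j)) μ := hint2.sub hint3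
            rw [integral_add hint1 hint23, integral_sub hint2 hint3]
        _ = ∫ ω, DRf S lam (v (t + 1) ω) ∂μ := by
            refine integral_congr_ae (Filter.Eventually.of_forall fun ω => ?_)
            simp only
            rw [hpt ω]; ring
    · -- i ∈ S, j ∉ S
      set h : (Fin N → ℝ) → ℝ := fun x =>
        DRf (S.erase i) (fun n => lam (n + 1)) x - DRf (S.erase i) lam x with hh_def
      have hhmeas : Measurable h :=
        (DRf_measurable _ _).sub (DRf_measurable _ _)
      set Ch := (∑ A ∈ (S.erase i).powerset, |lam (A.card + 1)|)
        + ∑ A ∈ (S.erase i).powerset, |lam A.card| with hCh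
      have hhbd : ∀ x : Fin N → ℝ, (∀ p, x p ∈ Set.Icc (0:ℝ) 1) → |h x| ≤ Ch := by
        intro x hx
        have h1 := abs_le.mp (DRf_abs_le (S := S.erase i) (lam := fun n => lam (n+1)) hx)
        have h2 := abs_le.mp (DRf_abs_le (S := S.erase i) (lam := lam) hx)
        rw [hCh, hh_def]
        simp only
        rw [abs_le]
        constructor <;> [linarith; linarith]
      have hcongrE : ∀ ω (g : ℕ → ℝ),
          DRf (S.erase i) g (v (t + 1) ω) = DRf (S.erase i) g (v t ω) := by
        intro ω g
        refine DRf_congr fun p hp => ?_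
        have hpi : p ≠ i := (Finset.mem_erase.mp hp).1
        have hpj : p ≠ j := fun hpj => hjS (hpj ▸ (Finset.mem_erase.mp hp).2)
        exact hoth ω p hpi hpj
      have hpt : ∀ ω, DRf S lam (v (t + 1) ω)
          = DRf S lam (v t ω) + h (v t ω) * (v (t + 1) ω i - v t ω i) := by
        intro ω
        have e1 := DRf_split (S := S) (lam := lam) (x := v t ω) hiS
        have e1' := DRf_split (S := S) (lam := lam) (x := v (t + 1) ω) hiS
        rw [e1, e1', hcongrE ω lam, hcongrE ω (fun n => lam (n + 1)), hh_def]
        ring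
      have hVi'meas : Measurable (fun ω => v (t + 1) ω i) :=
        (measurable_pi_apply i).comp (hvmeas (t + 1))
      have hint1 : Integrable (fun ω => DRf S lam (v t ω)) μ :=
        hbd _ _ ((DRf_measurable S lam).comp (hvmeas t))
          (fun ω => DRf_abs_le (fun p => hvrange t ω p))
      have heq : ∫ ω, h (v t ω) * v (t + 1) ω i ∂μ = ∫ ω, h (v t ω) * v t ω i ∂μ := by
        rw [pull h Ch hhmeas hhbd (fun ω => v (t + 1) ω i) hVi'meas (fun ω => habs1 _ _ _)]
        refine integral_congr_ae ?_
        filter_upwards [hmarg] with ω hω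
        rw [hω]
      have hChnn : 0 ≤ Ch := le_trans (abs_nonneg _)
        (hhbd (fun _ => 0) (fun p => ⟨le_rfl, zero_le_one⟩))
      have hprodbd : ∀ (Z : Ω → ℝ), (∀ ω, |Z ω| ≤ 1) → ∀ ω, |h (v t ω) * Z ω| ≤ Ch := by
        intro Z hZ ω
        rw [abs_mul]
        calc |h (v t ω)| * |Z ω| ≤ Ch * 1 :=
          mul_le_mul (hhbd _ (fun p => hvrange t ω p)) (hZ ω) (abs_nonneg _) hChnn
        _ = Ch := mul_one Ch
      have hint2 : Integrable (fun ω => h (v t ω) * v (t + 1) ω i) μ :=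
        hbd _ Ch ((hhmeas.comp (hvmeas t)).mul hVi'meas) (hprodbd _ (fun ω => habs1 _ _ _))
      have hint3 : Integrable (fun ω => h (v t ω) * v t ω i) μ :=
        hbd _ Ch ((hhmeas.comp (hvmeas t)).mul
          ((measurable_pi_apply i).comp (hvmeas t))) (hprodbd _ (fun ω => habs1 _ _ _))
      calc ∫ ω, DRf S lam (v t ω) ∂μ
          = ∫ ω, DRf S lam (v t ω) ∂μ
            + (∫ ω, h (v t ω) * v (t + 1) ω i ∂μ - ∫ ω, h (v t ω) * v t ω i ∂μ) := by
            rw [heq]; ring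
        _ = ∫ ω, (DRf S lam (v t ω)
              + (h (v t ω) * v (t + 1) ω i - h (v t ω) * v t ω i)) ∂μ := by
            have hint23 : Integrable (fun ω => h (v t ω) * v (t + 1) ω i
                - h (v t ω) * v t ω i) μ := hint2.sub hint3
            rw [integral_add hint1 hint23, integral_sub hint2 hint3]
        _ = ∫ ω, DRf S lam (v (t + 1) ω) ∂μ := by
            refine integral_congr_ae (Filter.Eventually.of_forall fun ω => ?_)
            simp only
            rw [hpt ω]; ring
        _ ≤ ∫ ω, DRf S lam (v (t + 1) ω) ∂μ := le_rfl
    · -- j ∈ S, i ∉ S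
      set h : (Fin N → ℝ) → ℝ := fun x =>
        DRf (S.erase j) (fun n => lam (n + 1)) x - DRf (S.erase j) lam x with hh_def
      have hhmeas : Measurable h :=
        (DRf_measurable _ _).sub (DRf_measurable _ _)
      set Ch := (∑ A ∈ (S.erase j).powerset, |lam (A.card + 1)|)
        + ∑ A ∈ (S.erase j).powerset, |lam A.card| with hCh
      have hhbd : ∀ x : Fin N → ℝ, (∀ p, x p ∈ Set.Icc (0:ℝ) 1) → |h x| ≤ Ch := by
        intro x hx
        have h1 := abs_le.mp (DRf_abs_le (S := S.erase j) (lam := fun n => lam (n+1)) hx)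
        have h2 := abs_le.mp (DRf_abs_le (S := S.erase j) (lam := lam) hx)
        rw [hCh, hh_def]
        simp only
        rw [abs_le]
        constructor <;> [linarith; linarith]
      have hcongrE : ∀ ω (g : ℕ → ℝ),
          DRf (S.erase j) g (v (t + 1) ω) = DRf (S.erase j) g (v t ω) := by
        intro ω g
        refine DRf_congr fun p hp => ?_
        have hpj : p ≠ j := (Finset.mem_erase.mp hp).1
        have hpi : p ≠ i := fun hpi => hiS (hpi ▸ (Finset.mem_erase.mp hp).2)
        exact hoth ω p hpi hpj
      have hpt : ∀ ω, DRf S lam (v (t + 1) ω)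
          = DRf S lam (v t ω) + h (v t ω) * (v t ω i - v (t + 1) ω i) := by
        intro ω
        have e1 := DRf_split (S := S) (lam := lam) (x := v t ω) hjS
        have e1' := DRf_split (S := S) (lam := lam) (x := v (t + 1) ω) hjS
        have hbj : v (t + 1) ω j = v t ω i + v t ω j - v (t + 1) ω i := by
          have := hsumij ω; linarith
        rw [e1, e1', hcongrE ω lam, hcongrE ω (fun n => lam (n + 1)), hh_def, hbj]
        ring
      have hVi'meas : Measurable (fun ω => v (t + 1) ω i) :=
        (measurable_pi_apply i).comp (hvmeas (t + 1))
      have hint1 : Integrable (fun ω => DRf S lam (v t ω)) μ :=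
        hbd _ _ ((DRf_measurable S lam).comp (hvmeas t))
          (fun ω => DRf_abs_le (fun p => hvrange t ω p))
      have heq : ∫ ω, h (v t ω) * v (t + 1) ω i ∂μ = ∫ ω, h (v t ω) * v t ω i ∂μ := by
        rw [pull h Ch hhmeas hhbd (fun ω => v (t + 1) ω i) hVi'meas (fun ω => habs1 _ _ _)]
        refine integral_congr_ae ?_
        filter_upwards [hmarg] with ω hω
        rw [hω]
      have hChnn : 0 ≤ Ch := le_trans (abs_nonneg _)
        (hhbd (fun _ => 0) (fun p => ⟨le_rfl, zero_le_one⟩))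
      have hprodbd : ∀ (Z : Ω → ℝ), (∀ ω, |Z ω| ≤ 1) → ∀ ω, |h (v t ω) * Z ω| ≤ Ch := by
        intro Z hZ ω
        rw [abs_mul]
        calc |h (v t ω)| * |Z ω| ≤ Ch * 1 :=
          mul_le_mul (hhbd _ (fun p => hvrange t ω p)) (hZ ω) (abs_nonneg _) hChnn
        _ = Ch := mul_one Ch
      have hint2 : Integrable (fun ω => h (v t ω) * v (t + 1) ω i) μ :=
        hbd _ Ch ((hhmeas.comp (hvmeas t)).mul hVi'meas) (hprodbd _ (fun ω => habs1 _ _ _))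
      have hint3 : Integrable (fun ω => h (v t ω) * v t ω i) μ :=
        hbd _ Ch ((hhmeas.comp (hvmeas t)).mul
          ((measurable_pi_apply i).comp (hvmeas t))) (hprodbd _ (fun ω => habs1 _ _ _))
      calc ∫ ω, DRf S lam (v t ω) ∂μ
          = ∫ ω, DRf S lam (v t ω) ∂μ
            + (∫ ω, h (v t ω) * v t ω i ∂μ - ∫ ω, h (v t ω) * v (t + 1) ω i ∂μ) := by
            rw [heq]; ring
        _ = ∫ ω, (DRf S lam (v t ω)
              + (h (v t ω) * v t ω i - h (v t ω) * v (t + 1) ω i)) ∂μ := by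
            have hint32 : Integrable (fun ω => h (v t ω) * v t ω i
                - h (v t ω) * v (t + 1) ω i) μ := hint3.sub hint2
            rw [integral_add hint1 hint32, integral_sub hint3 hint2]
        _ = ∫ ω, DRf S lam (v (t + 1) ω) ∂μ := by
            refine integral_congr_ae (Filter.Eventually.of_forall fun ω => ?_)
            simp only
            rw [hpt ω]; ring
        _ ≤ ∫ ω, DRf S lam (v (t + 1) ω) ∂μ := le_rfl
    · -- neither in S
      refine le_of_eq (integral_congr_ae (Filter.Eventually.of_forall fun ω => ?_))
      refine DRf_congr fun p hp => ?_
      have hpi : p ≠ i := fun hpi => hiS (hpi ▸ hp)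
      have hpj : p ≠ j := fun hpj => hjS (hpj ▸ hp)
      exact (hoth ω p hpi hpj).symm
  -- induction
  have hchain : ∀ t, t ≤ m →
      ∫ ω, DRf S lam (v 0 ω) ∂μ ≤ ∫ ω, DRf S lam (v t ω) ∂μ := by
    intro t
    induction t with
    | zero => intro _; exact le_rfl
    | succ t ih =>
      intro ht
      exact le_trans (ih (Nat.le_of_succ_le ht)) (key t (Nat.lt_of_succ_le ht))
  have hm := hchain m le_rfl
  -- evaluate at time 0
  have h0 : ∫ ω, DRf S lam (v 0 ω) ∂μ = DRf S lam y := by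
    have : (fun ω => DRf S lam (v 0 ω)) = fun _ => DRf S lam y := by
      funext ω; rw [hv0 ω]
    rw [this, integral_const]
    simp
  -- evaluate at time m
  have hmend : ∫ ω, DRf S lam (v m ω) ∂μ
      = ∫ ω, (∑ ℓ ∈ Finset.range (S.card + 1),
          if (∑ i ∈ S, v m ω i) = (ℓ : ℝ) then lam ℓ else 0) ∂μ := by
    refine integral_congr_ae (Filter.Eventually.of_forall fun ω => ?_)
    exact DRf_of_01 (fun i _ => h01 ω i)
  -- the RHS is DRf S lam y
  have hRHS : (∑ ℓ ∈ Finset.range (S.card + 1), lam ℓ *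
        ∑ A ∈ S.powersetCard ℓ, (∏ a ∈ A, y a) * ∏ b ∈ S \ A, (1 - y b))
      = DRf S lam y := by
    unfold DRf
    rw [Finset.powerset_card_disjiUnion]
    refine Eq.trans ?_ (Finset.sum_disjiUnion ..).symm
    refine Finset.sum_congr rfl fun ℓ hℓ => ?_
    rw [Finset.mul_sum]
    refine Finset.sum_congr rfl fun A hA => ?_
    rw [(Finset.mem_powersetCard.mp hA).2]
  rw [ge_iff_le, hRHS, ← h0, ← hmend]
  exact hm
end

section
/- For any y ∈ [0,1]^N, S ⊆ [N], and positive integer k, if ŷ denotes the output of dependent rounding applied to y, then E[min{k, Σ_{i∈S} ŷ_i}] ≥ k·(1 − exp(−(Σ_{i∈S} y_i)/k)). -/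
open MeasureTheory ProbabilityTheory

/-- Weierstrass product inequality: `1 - ∑ f ≤ ∏ (1 - f)` for `f i ∈ [0,1]`. -/
lemma aux_weierstrass {ι : Type*} (s : Finset ι) (f : ι → ℝ)
    (h0 : ∀ i ∈ s, 0 ≤ f i) (h1 : ∀ i ∈ s, f i ≤ 1) :
    1 - ∑ i ∈ s, f i ≤ ∏ i ∈ s, (1 - f i) := by
  classical
  induction s using Finset.induction_on with
  | empty => simp
  | @insert a s hnot ih =>
    rw [Finset.sum_insert hnot, Finset.prod_insert hnot]
    have h0' : ∀ i ∈ s, 0 ≤ f i := fun i hi => h0 i (Finset.mem_insert_of_mem hi)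
    have h1' : ∀ i ∈ s, f i ≤ 1 := fun i hi => h1 i (Finset.mem_insert_of_mem hi)
    have ha0 : 0 ≤ f a := h0 a (Finset.mem_insert_self a s)
    have ha1 : f a ≤ 1 := h1 a (Finset.mem_insert_self a s)
    have ihs := ih h0' h1'
    have hsum0 : 0 ≤ ∑ i ∈ s, f i := Finset.sum_nonneg h0'
    nlinarith [mul_le_mul_of_nonneg_left ihs (by linarith : (0:ℝ) ≤ 1 - f a)]

/-- For dependent rounding `ŷ` of `y ∈ [0,1]^N` — i.e. a `{0,1}`-valued random vector
satisfying (P1) marginals, (P2) sum-preservation, (P3) negative correlation — any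
`S ⊆ [N]` and positive integer `k` satisfy
`E[min{k, Σ_{i∈S} ŷ_i}] ≥ k (1 − exp(−(Σ_{i∈S} y_i)/k))`. -/
theorem stmt_14 {Ω : Type*} [MeasurableSpace Ω] (μ : Measure Ω) [IsProbabilityMeasure μ]
    (N : ℕ) (y : Fin N → ℝ) (hy : ∀ i, y i ∈ Set.Icc (0 : ℝ) 1)
    (yhat : Ω → Fin N → ℝ) (hmeas : Measurable yhat)
    (h01 : ∀ ω i, yhat ω i = 0 ∨ yhat ω i = 1)
    -- (P1) marginals
    (hP1 : ∀ i, μ {ω | yhat ω i = 1} = ENNReal.ofReal (y i))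
    -- (P2) sum-preservation
    (hP2 : ∀ᵐ ω ∂μ, (∑ i, yhat ω i) = (⌊∑ i, y i⌋ : ℝ) ∨ (∑ i, yhat ω i) = (⌈∑ i, y i⌉ : ℝ))
    -- (P3) negative correlation
    (hP3 : ∀ T : Finset (Fin N),
      μ {ω | ∀ i ∈ T, yhat ω i = 1} ≤ ENNReal.ofReal (∏ i ∈ T, y i) ∧
      μ {ω | ∀ i ∈ T, yhat ω i = 0} ≤ ENNReal.ofReal (∏ i ∈ T, (1 - y i)))
    (S : Finset (Fin N)) (k : ℕ) (hk : 0 < k) :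
    ∫ ω, min (k : ℝ) (∑ i ∈ S, yhat ω i) ∂μ
      ≥ (k : ℝ) * (1 - Real.exp (-(∑ i ∈ S, y i) / k)) := by
  classical
  have hk0 : (0:ℝ) < (k:ℝ) := by exact_mod_cast hk
  have hk1 : (1:ℝ) ≤ (k:ℝ) := by exact_mod_cast hk
  have hmi : ∀ i, Measurable fun ω => yhat ω i :=
    fun i => (measurable_pi_apply i).comp hmeas
  have hy01 : ∀ ω i, 0 ≤ yhat ω i ∧ yhat ω i ≤ 1 := by
    intro ω i; rcases h01 ω i with h | h <;> simp [h]
  have hdiv01 : ∀ ω i, 0 ≤ yhat ω i / (k:ℝ) ∧ yhat ω i / (k:ℝ) ≤ 1 := by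
    intro ω i
    refine ⟨div_nonneg (hy01 ω i).1 hk0.le, ?_⟩
    rw [div_le_one hk0]
    linarith [(hy01 ω i).2]
  set g : Ω → ℝ := fun ω => ∏ i ∈ S, (1 - yhat ω i / (k:ℝ)) with hgdef
  have hg01 : ∀ ω, 0 ≤ g ω ∧ g ω ≤ 1 := fun ω =>
    ⟨Finset.prod_nonneg fun i _ => by linarith [(hdiv01 ω i).2],
     Finset.prod_le_one (fun i _ => by linarith [(hdiv01 ω i).2])
       (fun i _ => by linarith [(hdiv01 ω i).1])⟩
  -- pointwise lower bound for min
  have hpt : ∀ ω, (k:ℝ) * (1 - g ω) ≤ min (k:ℝ) (∑ i ∈ S, yhat ω i) := by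
    intro ω
    refine le_min ?_ ?_
    · have := (hg01 ω).1; nlinarith
    · have hw : 1 - ∑ i ∈ S, yhat ω i / (k:ℝ) ≤ g ω :=
        aux_weierstrass S _ (fun i _ => (hdiv01 ω i).1) (fun i _ => (hdiv01 ω i).2)
      rw [← Finset.sum_div] at hw
      have : (k:ℝ) * (1 - g ω) ≤ (k:ℝ) * ((∑ i ∈ S, yhat ω i) / (k:ℝ)) := by
        have : 1 - g ω ≤ (∑ i ∈ S, yhat ω i) / (k:ℝ) := by linarith
        exact mul_le_mul_of_nonneg_left this hk0.le
      rwa [mul_div_cancel₀ _ (ne_of_gt hk0)] at this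
  -- measurable sets A_T
  have hAmeas : ∀ T : Finset (Fin N), MeasurableSet {ω | ∀ i ∈ T, yhat ω i = 0} := by
    intro T
    have : {ω | ∀ i ∈ T, yhat ω i = 0} = ⋂ i ∈ T, {ω | yhat ω i = 0} := by
      ext ω; simp
    rw [this]
    exact MeasurableSet.biInter T.countable_toSet
      (fun i _ => (hmi i) (measurableSet_singleton 0))
  -- product over T of (1 - yhat) is the indicator of A_T
  have hind : ∀ (T : Finset (Fin N)) (ω : Ω),
      (∏ i ∈ T, (1 - yhat ω i)) =
        Set.indicator {ω | ∀ i ∈ T, yhat ω i = 0} (fun _ => (1:ℝ)) ω := by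
    intro T ω
    by_cases h : ∀ i ∈ T, yhat ω i = 0
    · rw [Set.indicator_of_mem (show ω ∈ {ω | ∀ i ∈ T, yhat ω i = 0} from h)]
      exact Finset.prod_eq_one fun i hi => by rw [h i hi]; ring
    · rw [Set.indicator_of_notMem (show ω ∉ {ω | ∀ i ∈ T, yhat ω i = 0} from h)]
      push_neg at h
      obtain ⟨i, hi, hne⟩ := h
      have h1 : yhat ω i = 1 := (h01 ω i).resolve_left hne
      exact Finset.prod_eq_zero hi (by rw [h1]; ring)
  -- expansion of g
  have hexp : ∀ ω, g ω = ∑ T ∈ S.powerset,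
      ((1/(k:ℝ)) ^ T.card * (1 - 1/(k:ℝ)) ^ (S \ T).card) *
        ∏ i ∈ T, (1 - yhat ω i) := by
    intro ω
    have : ∀ i ∈ S, 1 - yhat ω i / (k:ℝ) =
        (1/(k:ℝ)) * (1 - yhat ω i) + (1 - 1/(k:ℝ)) := by
      intro i _; field_simp; ring
    rw [hgdef]
    simp only []
    rw [Finset.prod_congr rfl this, Finset.prod_add]
    refine Finset.sum_congr rfl fun T _ => ?_
    rw [Finset.prod_const, Finset.prod_mul_distrib, Finset.prod_const]
    ring
  -- integrability
  have hgmeas : Measurable g := by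
    apply Finset.measurable_prod
    intro i _
    exact (measurable_const.sub ((hmi i).div_const _))
  have hXmeas : Measurable fun ω => ∑ i ∈ S, yhat ω i :=
    Finset.measurable_sum _ fun i _ => hmi i
  have hminmeas : Measurable fun ω => min (k:ℝ) (∑ i ∈ S, yhat ω i) :=
    measurable_const.min hXmeas
  have hmin_int : Integrable (fun ω => min (k:ℝ) (∑ i ∈ S, yhat ω i)) μ := by
    refine Integrable.mono' (integrable_const (k:ℝ)) hminmeas.aestronglyMeasurable ?_
    refine Filter.Eventually.of_forall fun ω => ?_
    have hX0 : 0 ≤ ∑ i ∈ S, yhat ω i := Finset.sum_nonneg fun i _ => (hy01 ω i).1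
    rw [Real.norm_eq_abs, abs_of_nonneg (le_min hk0.le hX0)]
    exact min_le_left _ _
  have hg_int : Integrable g μ := by
    refine Integrable.mono' (integrable_const (1:ℝ)) hgmeas.aestronglyMeasurable ?_
    refine Filter.Eventually.of_forall fun ω => ?_
    rw [Real.norm_eq_abs, abs_of_nonneg (hg01 ω).1]
    exact (hg01 ω).2
  -- compute / bound ∫ g
  have hg_int_eq : ∫ ω, g ω ∂μ = ∑ T ∈ S.powerset,
      ((1/(k:ℝ)) ^ T.card * (1 - 1/(k:ℝ)) ^ (S \ T).card) *
        (μ {ω | ∀ i ∈ T, yhat ω i = 0}).toReal := by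
    calc ∫ ω, g ω ∂μ
        = ∫ ω, ∑ T ∈ S.powerset,
            ((1/(k:ℝ)) ^ T.card * (1 - 1/(k:ℝ)) ^ (S \ T).card) *
              Set.indicator {ω | ∀ i ∈ T, yhat ω i = 0} (fun _ => (1:ℝ)) ω ∂μ := by
          refine integral_congr_ae (Filter.Eventually.of_forall fun ω => ?_)
          rw [hexp ω]
          exact Finset.sum_congr rfl fun T _ => by rw [hind T ω]
      _ = ∑ T ∈ S.powerset, ∫ ω,
            ((1/(k:ℝ)) ^ T.card * (1 - 1/(k:ℝ)) ^ (S \ T).card) *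
              Set.indicator {ω | ∀ i ∈ T, yhat ω i = 0} (fun _ => (1:ℝ)) ω ∂μ := by
          refine integral_finset_sum _ fun T _ => ?_
          exact (((integrable_const (1:ℝ)).indicator (hAmeas T)).const_mul _)
      _ = ∑ T ∈ S.powerset,
          ((1/(k:ℝ)) ^ T.card * (1 - 1/(k:ℝ)) ^ (S \ T).card) *
            (μ {ω | ∀ i ∈ T, yhat ω i = 0}).toReal := by
          refine Finset.sum_congr rfl fun T _ => ?_
          rw [integral_const_mul, integral_indicator_const (1:ℝ) (hAmeas T), smul_eq_mul,
            mul_one]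
          rfl
  have hyi : ∀ i, 0 ≤ 1 - y i ∧ 1 - y i ≤ 1 := by
    intro i; have := hy i; simp only [Set.mem_Icc] at this; constructor <;> linarith [this.1, this.2]
  have hcoeff : ∀ T : Finset (Fin N), 0 ≤ (1/(k:ℝ)) ^ T.card * (1 - 1/(k:ℝ)) ^ (S \ T).card := by
    intro T
    have h1 : (0:ℝ) ≤ 1/(k:ℝ) := by positivity
    have h2 : (0:ℝ) ≤ 1 - 1/(k:ℝ) := by
      have : 1/(k:ℝ) ≤ 1 := by rw [div_le_one hk0]; exact hk1
      linarith
    exact mul_nonneg (pow_nonneg h1 _) (pow_nonneg h2 _)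
  have hg_le : ∫ ω, g ω ∂μ ≤ ∏ i ∈ S, (1 - y i / (k:ℝ)) := by
    rw [hg_int_eq]
    have step1 : ∑ T ∈ S.powerset,
        ((1/(k:ℝ)) ^ T.card * (1 - 1/(k:ℝ)) ^ (S \ T).card) *
          (μ {ω | ∀ i ∈ T, yhat ω i = 0}).toReal
        ≤ ∑ T ∈ S.powerset,
        ((1/(k:ℝ)) ^ T.card * (1 - 1/(k:ℝ)) ^ (S \ T).card) * ∏ i ∈ T, (1 - y i) := by
      refine Finset.sum_le_sum fun T _ => ?_
      refine mul_le_mul_of_nonneg_left ?_ (hcoeff T)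
      have h3 := (hP3 T).2
      have hprod0 : 0 ≤ ∏ i ∈ T, (1 - y i) := Finset.prod_nonneg fun i _ => (hyi i).1
      calc (μ {ω | ∀ i ∈ T, yhat ω i = 0}).toReal
          ≤ (ENNReal.ofReal (∏ i ∈ T, (1 - y i))).toReal :=
            ENNReal.toReal_mono ENNReal.ofReal_ne_top h3
        _ = ∏ i ∈ T, (1 - y i) := ENNReal.toReal_ofReal hprod0
    have step2 : ∑ T ∈ S.powerset,
        ((1/(k:ℝ)) ^ T.card * (1 - 1/(k:ℝ)) ^ (S \ T).card) * ∏ i ∈ T, (1 - y i)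
        = ∏ i ∈ S, (1 - y i / (k:ℝ)) := by
      have : ∀ i ∈ S, 1 - y i / (k:ℝ) =
          (1/(k:ℝ)) * (1 - y i) + (1 - 1/(k:ℝ)) := by
        intro i _; field_simp; ring
      rw [Finset.prod_congr rfl this, Finset.prod_add]
      refine Finset.sum_congr rfl fun T _ => ?_
      rw [Finset.prod_const, Finset.prod_mul_distrib, Finset.prod_const]
      ring
    linarith
  -- compare with exp
  have hprod_exp : ∏ i ∈ S, (1 - y i / (k:ℝ)) ≤ Real.exp (-(∑ i ∈ S, y i) / k) := by
    have : ∏ i ∈ S, (1 - y i / (k:ℝ)) ≤ ∏ i ∈ S, Real.exp (-(y i / (k:ℝ))) := by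
      refine Finset.prod_le_prod (fun i _ => ?_) (fun i _ => ?_)
      · have hd : y i / (k:ℝ) ≤ 1 := by
          rw [div_le_one hk0]; linarith [(hy i).2]
        linarith
      · linarith [Real.add_one_le_exp (-(y i / (k:ℝ)))]
    calc ∏ i ∈ S, (1 - y i / (k:ℝ)) ≤ ∏ i ∈ S, Real.exp (-(y i / (k:ℝ))) := this
      _ = Real.exp (∑ i ∈ S, -(y i / (k:ℝ))) := (Real.exp_sum S _).symm
      _ = Real.exp (-(∑ i ∈ S, y i) / k) := by
          congr 1
          rw [Finset.sum_neg_distrib, ← Finset.sum_div, neg_div]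
  -- put it together
  have hlhs : (k:ℝ) * (1 - ∫ ω, g ω ∂μ) ≤ ∫ ω, min (k:ℝ) (∑ i ∈ S, yhat ω i) ∂μ := by
    have : ∫ ω, (k:ℝ) * (1 - g ω) ∂μ ≤ ∫ ω, min (k:ℝ) (∑ i ∈ S, yhat ω i) ∂μ := by
      refine integral_mono ?_ hmin_int (fun ω => hpt ω)
      exact ((integrable_const (1:ℝ)).sub hg_int).const_mul _
    calc (k:ℝ) * (1 - ∫ ω, g ω ∂μ)
        = ∫ ω, (k:ℝ) * (1 - g ω) ∂μ := by
          rw [integral_const_mul, integral_sub (integrable_const 1) hg_int, integral_const]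
          simp
      _ ≤ _ := this
  have : (k:ℝ) * (1 - Real.exp (-(∑ i ∈ S, y i) / k)) ≤ (k:ℝ) * (1 - ∫ ω, g ω ∂μ) := by
    apply mul_le_mul_of_nonneg_left _ hk0.le
    have := hg_le.trans hprod_exp
    linarith
  linarith
end

section
/- Let X be a {0,1}-valued random variable with P[X=1] = y_1 and let Y be a nonnegative integer-valued random variable independent of X, and let k ≥ 1 be an integer. Then E[min{k, X + Y}] ≥ y_1 + (1 − y_1/k)·E[min{k, Y}]. -/
open MeasureTheory ProbabilityTheory

/-- Key inductive inequality: for a `{0,1}`-valued `X` with `P[X=1] = y₁`, a nonnegative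
integer-valued `Y` independent of `X`, and an integer `k ≥ 1`,
`E[min{k, X+Y}] ≥ y₁ + (1 − y₁/k) E[min{k, Y}]`. -/
theorem stmt_15 {Ω : Type*} [MeasurableSpace Ω] (μ : Measure Ω) [IsProbabilityMeasure μ]
    (X : Ω → ℝ) (Y : Ω → ℕ) (y₁ : ℝ)
    (hXmeas : Measurable X) (hYmeas : Measurable Y)
    (hX01 : ∀ ω, X ω = 0 ∨ X ω = 1)
    (hXmarg : μ {ω | X ω = 1} = ENNReal.ofReal y₁) (hy₁ : y₁ ∈ Set.Icc (0 : ℝ) 1)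
    (hindep : IndepFun X Y μ)
    (k : ℕ) (hk : 1 ≤ k) :
    ∫ ω, min (k : ℝ) (X ω + (Y ω : ℝ)) ∂μ
      ≥ y₁ + (1 - y₁ / k) * ∫ ω, min (k : ℝ) ((Y ω : ℝ)) ∂μ := by
  obtain ⟨hy0, hy1'⟩ := hy₁
  have hk' : (1:ℝ) ≤ (k:ℝ) := by exact_mod_cast hk
  have hkpos : (0:ℝ) < (k:ℝ) := lt_of_lt_of_le one_pos hk'
  set f : ℝ → ℝ := ({1} : Set ℝ).indicator (fun _ => (1:ℝ)) with hf_def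
  set g : ℕ → ℝ := fun n => min (k:ℝ) n with hg_def
  have hf : Measurable f := measurable_const.indicator (measurableSet_singleton 1)
  have hg : Measurable g := measurable_from_top
  have hfX : Measurable (fun ω => f (X ω)) := hf.comp hXmeas
  have hmY : Measurable (fun ω => min (k:ℝ) (Y ω : ℝ)) := hg.comp hYmeas
  have hFmeas : Measurable (fun ω => min (k:ℝ) (X ω + (Y ω : ℝ))) :=
    measurable_const.min (hXmeas.add (measurable_from_top.comp hYmeas))
  have int_of_bd : ∀ h : Ω → ℝ, Measurable h → (∀ ω, |h ω| ≤ (k:ℝ)) → Integrable h μ := by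
    intro h hm hb
    exact (integrable_const (k:ℝ)).mono' hm.aestronglyMeasurable
      (Filter.Eventually.of_forall fun ω => by simpa [Real.norm_eq_abs] using hb ω)
  have hYnn : ∀ ω, (0:ℝ) ≤ (Y ω : ℝ) := fun ω => Nat.cast_nonneg _
  have hm_bd : ∀ ω, |min (k:ℝ) (Y ω : ℝ)| ≤ (k:ℝ) := by
    intro ω
    rw [abs_le]
    constructor
    · have : (0:ℝ) ≤ min (k:ℝ) (Y ω : ℝ) := le_min hkpos.le (hYnn ω)
      linarith
    · exact min_le_left _ _
  have hf_bd : ∀ x : ℝ, |f x| ≤ 1 := by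
    intro x
    by_cases hx : x = 1 <;> simp [hf_def, Set.indicator, hx]
  have hInt_m : Integrable (fun ω => min (k:ℝ) (Y ω : ℝ)) μ := int_of_bd _ hmY hm_bd
  have hInt_F : Integrable (fun ω => min (k:ℝ) (X ω + (Y ω : ℝ))) μ := by
    refine int_of_bd _ hFmeas fun ω => ?_
    have hX0 : (0:ℝ) ≤ X ω := by rcases hX01 ω with h | h <;> rw [h] <;> norm_num
    rw [abs_le]
    exact ⟨by have := le_min hkpos.le (add_nonneg hX0 (hYnn ω)); linarith, min_le_left _ _⟩
  have hInt_i : Integrable (fun ω => f (X ω)) μ :=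
    int_of_bd _ hfX fun ω => (hf_bd _).trans hk'
  have hInt_im : Integrable (fun ω => f (X ω) * min (k:ℝ) (Y ω : ℝ)) μ := by
    refine int_of_bd _ (hfX.mul hmY) fun ω => ?_
    rw [abs_mul]
    calc |f (X ω)| * |min (k:ℝ) (Y ω : ℝ)| ≤ 1 * (k:ℝ) :=
          mul_le_mul (hf_bd _) (hm_bd _) (abs_nonneg _) zero_le_one
      _ = (k:ℝ) := one_mul _
  -- integral of the indicator is y₁
  have hIi : ∫ ω, f (X ω) ∂μ = y₁ := by
    have heq : (fun ω => f (X ω)) = Set.indicator (X ⁻¹' {1}) (fun _ => (1:ℝ)) := by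
      funext ω
      by_cases hx : X ω = 1 <;> simp [hf_def, Set.indicator, hx]
    rw [heq, integral_indicator_const _ (hXmeas (measurableSet_singleton 1))]
    have hset : X ⁻¹' {1} = {ω | X ω = 1} := rfl
    rw [hset, measureReal_def, hXmarg]
    simp [ENNReal.toReal_ofReal hy0]
  -- independence gives the product formula
  have hprod : ∫ ω, f (X ω) * min (k:ℝ) (Y ω : ℝ) ∂μ
      = y₁ * ∫ ω, min (k:ℝ) (Y ω : ℝ) ∂μ := by
    have h := (IndepFun.comp hindep hf hg).integral_fun_mul_eq_mul_integral hfX.aestronglyMeasurable hmY.aestronglyMeasurable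
    calc ∫ ω, f (X ω) * min (k:ℝ) (Y ω : ℝ) ∂μ
        = (∫ ω, f (X ω) ∂μ) * ∫ ω, min (k:ℝ) (Y ω : ℝ) ∂μ := h
      _ = y₁ * ∫ ω, min (k:ℝ) (Y ω : ℝ) ∂μ := by rw [hIi]
  -- pointwise key inequality
  have key : ∀ ω, f (X ω) + min (k:ℝ) (Y ω : ℝ) - (1/(k:ℝ)) * (f (X ω) * min (k:ℝ) (Y ω : ℝ))
      ≤ min (k:ℝ) (X ω + (Y ω : ℝ)) := by
    intro ω
    have ht : (0:ℝ) ≤ (Y ω : ℝ) := hYnn ω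
    have hk1 : (1:ℝ)/(k:ℝ) ≤ 1 := by rw [div_le_one hkpos]; exact hk'
    have hkinv : (1/(k:ℝ)) * (k:ℝ) = 1 := by field_simp
    have h1k : (0:ℝ) < 1/(k:ℝ) := by positivity
    rcases hX01 ω with h0 | h1
    · have hf0 : f (X ω) = 0 := by simp [hf_def, Set.indicator, h0]
      rw [hf0, h0]
      simp
    · have hf1 : f (X ω) = 1 := by simp [hf_def, Set.indicator, h1]
      rw [hf1, h1]
      set t := (Y ω : ℝ) with htdef
      rcases le_total (k:ℝ) t with h | h
      · rw [min_eq_left h, min_eq_left (by linarith : (k:ℝ) ≤ 1 + t)]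
        nlinarith
      · rw [min_eq_right h]
        rcases le_total (k:ℝ) (1+t) with h2 | h2
        · rw [min_eq_left h2]
          nlinarith [mul_nonneg (sub_nonneg.mpr h) (sub_nonneg.mpr hk1)]
        · rw [min_eq_right h2]
          nlinarith [mul_nonneg h1k.le ht]
  have hIntLHS : Integrable (fun ω => f (X ω) + min (k:ℝ) (Y ω : ℝ)
      - (1/(k:ℝ)) * (f (X ω) * min (k:ℝ) (Y ω : ℝ))) μ :=
    (hInt_i.add hInt_m).sub (hInt_im.const_mul _)
  have hmono := integral_mono hIntLHS hInt_F key
  have hsum : ∫ ω, (f (X ω) + min (k:ℝ) (Y ω : ℝ)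
      - (1/(k:ℝ)) * (f (X ω) * min (k:ℝ) (Y ω : ℝ))) ∂μ
      = y₁ + (1 - y₁/(k:ℝ)) * ∫ ω, min (k:ℝ) (Y ω : ℝ) ∂μ := by
    have hInt_sum : Integrable (fun ω => f (X ω) + min (k:ℝ) (Y ω : ℝ)) μ :=
      hInt_i.add hInt_m
    have hInt_cm : Integrable
        (fun ω => 1/(k:ℝ) * (f (X ω) * min (k:ℝ) (Y ω : ℝ))) μ :=
      hInt_im.const_mul _
    rw [integral_sub hInt_sum hInt_cm, integral_add hInt_i hInt_m,
      integral_const_mul, hIi, hprod]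
    ring
  rw [hsum] at hmono
  exact hmono
end
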